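/- arXiv:2406.17230 — 3 statements merged into one kernel-verified Lean document; each statement's English description precedes it below -/
import Mathlib

section
/- Let ρ be a separable bipartite density matrix on ℂ^{d_A}⊗ℂ^{d_B}, and take the generalized Gell-Mann matrices as the traceless orthogonal bases. Then with x = y = n = 1, the normalized extended correlation tensor satisfies ‖M̂_{1,1}^{(1)}‖_tr ≤ (1/2) √( (2 + d_A² − d_A)(2 + d_B² − d_B) ) (Li's criterion). -/
open Matrix BigOperators Kronecker
open scoped ComplexOrder

/-- The trace norm (sum of singular values) of a complex matrix. -/
noncomputable def traceNorm {m k : Type*} [Fintype m] [Fintype k] [DecidableEq k]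
    (X : Matrix m k ℂ) : ℝ :=
  ∑ i, Real.sqrt ((Matrix.isHermitian_conjTranspose_mul_self X).eigenvalues i)

/-- A density matrix: positive semidefinite with trace one. -/
def IsDensityMatrix {d : Type*} [Fintype d] [DecidableEq d] (ρ : Matrix d d ℂ) : Prop :=
  ρ.PosSemidef ∧ ρ.trace = 1

/-- Separability of a bipartite state (finite convex mixture of product density matrices). -/
def IsSeparableState (dA dB : ℕ)
    (ρ : Matrix (Fin dA × Fin dB) (Fin dA × Fin dB) ℂ) : Prop :=
  ∃ (N : ℕ) (p : Fin N → ℝ) (ρA : Fin N → Matrix (Fin dA) (Fin dA) ℂ)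
    (ρB : Fin N → Matrix (Fin dB) (Fin dB) ℂ),
    (∀ i, 0 ≤ p i) ∧ (∑ i, p i) = 1 ∧
    (∀ i, IsDensityMatrix (ρA i)) ∧ (∀ i, IsDensityMatrix (ρB i)) ∧
    ρ = ∑ i, (p i : ℂ) • (ρA i ⊗ₖ ρB i)

/-- The normalized extended correlation tensor `M̂_{x,y}^{(n)}`. -/
noncomputable def normExtCorrTensor (dA dB n : ℕ) (x y : ℝ)
    (r : Fin (dA ^ 2 - 1) → ℂ) (s : Fin (dB ^ 2 - 1) → ℂ)
    (T : Matrix (Fin (dA ^ 2 - 1)) (Fin (dB ^ 2 - 1)) ℂ) :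
    Matrix (Fin n ⊕ Fin (dA ^ 2 - 1)) (Fin n ⊕ Fin (dB ^ 2 - 1)) ℂ :=
  Matrix.fromBlocks
    (Matrix.of fun _ _ => ((x * y : ℝ) : ℂ))
    (Matrix.of fun _ j => ((x : ℝ) : ℂ) * s j)
    (Matrix.of fun i _ => ((y : ℝ) : ℂ) * r i)
    T

lemma parseval_sums {k' : Type*} [Fintype k'] [DecidableEq k'] (V : Matrix k' k' ℂ)
    (hV2 : V * Vᴴ = 1) (b : k' → ℂ) :
    ∑ i, Complex.normSq (∑ j, b j * V j i) = ∑ j, Complex.normSq (b j) := by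
  have h1 : ∀ i, (∑ j, b j * V j i) = (b ᵥ* V) i := by
    intro i; simp [Matrix.vecMul, dotProduct]
  have key : (((∑ i, Complex.normSq ((b ᵥ* V) i)) : ℝ) : ℂ)
      = ((∑ j, Complex.normSq (b j) : ℝ) : ℂ) := by
    push_cast
    calc (∑ i, (Complex.normSq ((b ᵥ* V) i) : ℂ))
        = ∑ i, (b ᵥ* V) i * (starRingEnd ℂ) ((b ᵥ* V) i) := by
          simp [Complex.mul_conj]
      _ = (b ᵥ* V) ⬝ᵥ star (b ᵥ* V) := by
          simp [dotProduct, Pi.star_apply, RCLike.star_def]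
      _ = (b ᵥ* V) ⬝ᵥ (Vᴴ *ᵥ star b) := by rw [Matrix.star_vecMul]
      _ = ((b ᵥ* V) ᵥ* Vᴴ) ⬝ᵥ star b := by rw [Matrix.dotProduct_mulVec]
      _ = (b ᵥ* (V * Vᴴ)) ⬝ᵥ star b := by rw [Matrix.vecMul_vecMul]
      _ = b ⬝ᵥ star b := by rw [hV2, Matrix.vecMul_one]
      _ = ∑ j, (Complex.normSq (b j) : ℂ) := by
          simp [dotProduct, Pi.star_apply, RCLike.star_def, Complex.mul_conj]
  have := Complex.ofReal_inj.mp key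
  simpa [h1] using this

lemma bessel_sums {m ι : Type*} [Fintype m] [Fintype ι] [DecidableEq ι]
    (P : ι → Prop) [DecidablePred P] (w : ι → m → ℂ) (A : m → ℂ)
    (hw : ∀ i j, (∑ q, (starRingEnd ℂ) (w i q) * w j q) = if i = j ∧ P i then 1 else 0)
    (hw0 : ∀ i, ¬ P i → w i = 0) :
    ∑ i, Complex.normSq (∑ q, (starRingEnd ℂ) (w i q) * A q) ≤ ∑ q, Complex.normSq (A q) := by
  classical
  set E := EuclideanSpace ℂ m
  let W : {i // P i} → E := fun i => (WithLp.equiv 2 _).symm (w i)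
  let Av : E := (WithLp.equiv 2 _).symm A
  have hinner : ∀ (i j : {i // P i}), (inner ℂ (W i) (W j) : ℂ)
      = ∑ q, (starRingEnd ℂ) (w i q) * w j q := by
    intro i j
    simp [W, PiLp.inner_apply, RCLike.inner_apply, E, mul_comm]
  have hWon : Orthonormal ℂ W := by
    rw [orthonormal_iff_ite]
    intro i j
    rw [hinner, hw]
    by_cases h : i = j
    · simp [h, j.2]
    · have : (i : ι) ≠ (j : ι) := fun hc => h (Subtype.ext hc)
      simp [h, this]
  have hbessel := hWon.sum_inner_products_le (s := Finset.univ) Av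
  have hnorm : ‖Av‖ ^ 2 = ∑ q, Complex.normSq (A q) := by
    rw [EuclideanSpace.norm_eq, Real.sq_sqrt (by positivity)]
    simp [Av, Complex.sq_norm, E]
  have hinner2 : ∀ (i : {i // P i}), (inner ℂ (W i) Av : ℂ)
      = ∑ q, (starRingEnd ℂ) (w i q) * A q := by
    intro i; simp [W, Av, PiLp.inner_apply, RCLike.inner_apply, E, mul_comm]
  -- convert sums
  have hsplit : ∑ i, Complex.normSq (∑ q, (starRingEnd ℂ) (w i q) * A q)
      = ∑ i : {i // P i}, Complex.normSq (∑ q, (starRingEnd ℂ) ((w i) q) * A q) := by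
    have h2 : ∑ i : {i // P i}, Complex.normSq (∑ q, (starRingEnd ℂ) ((w i) q) * A q)
        = ∑ x ∈ Finset.univ.filter P, Complex.normSq (∑ q, (starRingEnd ℂ) (w x q) * A q) := by
      rw [← Finset.sum_subtype_eq_sum_filter]
      rw [Finset.subtype_univ]
    rw [h2, ← Finset.sum_filter_add_sum_filter_not Finset.univ P
      (fun i => Complex.normSq (∑ q, (starRingEnd ℂ) (w i q) * A q))]
    have h3 : ∑ x ∈ Finset.univ.filter (fun i => ¬ P i),
        Complex.normSq (∑ q, (starRingEnd ℂ) (w x q) * A q) = 0 := by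
      apply Finset.sum_eq_zero
      intro i hi
      rw [Finset.mem_filter] at hi
      simp [hw0 i hi.2]
    rw [h3, add_zero]
  rw [hsplit]
  rw [← hnorm]
  refine le_trans (le_of_eq ?_) hbessel
  apply Finset.sum_congr rfl
  intro i _
  rw [hinner2 i]
  rw [Complex.normSq_eq_norm_sq]

lemma traceNorm_sum_le {m k' : Type*} [Fintype m] [Fintype k'] [DecidableEq k']
    {N : ℕ} (p : Fin N → ℝ) (hp : ∀ t, 0 ≤ p t)
    (a : Fin N → m → ℂ) (b : Fin N → k' → ℂ)
    (X : Matrix m k' ℂ) (hX : ∀ i j, X i j = ∑ t, (p t : ℂ) * a t i * b t j) :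
    traceNorm X ≤ ∑ t, p t * (Real.sqrt (∑ i, Complex.normSq (a t i)) *
      Real.sqrt (∑ j, Complex.normSq (b t j))) := by
  classical
  set A := Xᴴ * X with hAdef
  have hA : A.IsHermitian := Matrix.isHermitian_conjTranspose_mul_self X
  set μ : k' → ℝ := hA.eigenvalues with hμdef
  have hμ0 : ∀ i, 0 ≤ μ i := (Matrix.posSemidef_conjTranspose_mul_self X).eigenvalues_nonneg
  set V : Matrix k' k' ℂ := (hA.eigenvectorUnitary : Matrix k' k' ℂ) with hVdef
  have hV1 : Vᴴ * V = 1 := by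
    simpa [Matrix.star_eq_conjTranspose] using (Unitary.coe_star_mul_self hA.eigenvectorUnitary)
  have hV2 : V * Vᴴ = 1 := by
    simpa [Matrix.star_eq_conjTranspose] using (Unitary.coe_mul_star_self hA.eigenvectorUnitary)
  have hAV : A * V = V * Matrix.diagonal (fun i => (μ i : ℂ)) := by
    conv_lhs => rw [hA.spectral_theorem, Unitary.conjStarAlgAut_apply]
    rw [Matrix.mul_assoc, Matrix.mul_assoc]
    rw [show (star V) * V = 1 from ?_, Matrix.mul_one]
    · rfl
    · simpa [Matrix.star_eq_conjTranspose] using hV1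
  set Y := X * V with hYdef
  have hYY : Yᴴ * Y = Matrix.diagonal (fun i => (μ i : ℂ)) := by
    calc Yᴴ * Y = Vᴴ * (A * V) := by
          rw [hYdef, Matrix.conjTranspose_mul, hAdef]
          simp only [Matrix.mul_assoc]
      _ = (Vᴴ * V) * Matrix.diagonal (fun i => (μ i : ℂ)) := by rw [hAV, Matrix.mul_assoc]
      _ = _ := by rw [hV1, Matrix.one_mul]
  have hYent : ∀ i j, (∑ q, (starRingEnd ℂ) (Y q i) * Y q j)
      = if i = j then ((μ i : ℝ) : ℂ) else 0 := by
    intro i j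
    have h := congrFun (congrFun hYY i) j
    simpa [Matrix.mul_apply, Matrix.conjTranspose_apply, Matrix.diagonal_apply,
      RCLike.star_def] using h
  set sq : k' → ℝ := fun i => Real.sqrt (μ i) with hsqdef
  have hsqsq : ∀ i, sq i * sq i = μ i := fun i => Real.mul_self_sqrt (hμ0 i)
  set w : k' → m → ℂ := fun i q => (((sq i)⁻¹ : ℝ) : ℂ) * Y q i with hwdef
  have hwfact : ∀ i j, (∑ q, (starRingEnd ℂ) (w i q) * w j q)
      = (((sq i)⁻¹ : ℝ) : ℂ) * (((sq j)⁻¹ : ℝ) : ℂ) * ∑ q, (starRingEnd ℂ) (Y q i) * Y q j := by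
    intro i j
    rw [Finset.mul_sum]
    apply Finset.sum_congr rfl
    intro q _
    simp only [hwdef, _root_.map_mul, Complex.conj_ofReal]
    ring
  have hww : ∀ i j, (∑ q, (starRingEnd ℂ) (w i q) * w j q)
      = if i = j ∧ 0 < μ i then 1 else 0 := by
    intro i j
    rw [hwfact, hYent]
    by_cases h : i = j
    · subst h
      by_cases h2 : 0 < μ i
      · have hs : sq i ≠ 0 := by
          simp only [hsqdef]; positivity
        rw [if_pos rfl, if_pos ⟨rfl, h2⟩]
        have hreal : ((sq i)⁻¹ * (sq i)⁻¹ * μ i : ℝ) = 1 := by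
          rw [← hsqsq i]; field_simp
        calc ((((sq i)⁻¹ : ℝ) : ℂ)) * (((sq i)⁻¹ : ℝ) : ℂ) * (((μ i : ℝ)) : ℂ)
            = ((((sq i)⁻¹ * (sq i)⁻¹ * μ i : ℝ)) : ℂ) := by push_cast; ring
          _ = 1 := by rw [hreal]; norm_num
      · have hμi : μ i = 0 := le_antisymm (not_lt.1 h2) (hμ0 i)
        rw [if_pos rfl, if_neg (by simp [h2])]
        simp [hμi]
    · simp [h]
  have hw0 : ∀ i, ¬ 0 < μ i → w i = 0 := by
    intro i h
    have hμi : μ i = 0 := le_antisymm (not_lt.1 h) (hμ0 i)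
    funext q
    simp [hwdef, hsqdef, hμi]
  set c : Fin N → k' → ℂ := fun t i => ∑ q, (starRingEnd ℂ) (w i q) * a t q with hcdef
  set d : Fin N → k' → ℂ := fun t i => ∑ j, b t j * V j i with hddef
  have hYexp : ∀ q i, Y q i = ∑ t, (p t : ℂ) * a t q * d t i := by
    intro q i
    calc Y q i = ∑ j, X q j * V j i := by simp [hYdef, Matrix.mul_apply]
      _ = ∑ j, ∑ t, (p t : ℂ) * a t q * b t j * V j i := by
          apply Finset.sum_congr rfl
          intro j _
          rw [hX, Finset.sum_mul]
      _ = ∑ t, ∑ j, (p t : ℂ) * a t q * b t j * V j i := Finset.sum_comm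
      _ = ∑ t, (p t : ℂ) * a t q * d t i := by
          apply Finset.sum_congr rfl
          intro t _
          rw [hddef]
          simp only [Finset.mul_sum]
          apply Finset.sum_congr rfl
          intro j _
          ring
  have key1 : ∀ i, ((sq i : ℝ) : ℂ) = ∑ t, (p t : ℂ) * c t i * d t i := by
    intro i
    have e1 : ∑ q, (starRingEnd ℂ) (w i q) * Y q i = ((sq i : ℝ) : ℂ) := by
      have e0 : ∑ q, (starRingEnd ℂ) (w i q) * Y q i
          = (((sq i)⁻¹ : ℝ) : ℂ) * ∑ q, (starRingEnd ℂ) (Y q i) * Y q i := by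
        rw [Finset.mul_sum]
        apply Finset.sum_congr rfl
        intro q _
        simp only [hwdef, _root_.map_mul, Complex.conj_ofReal]
        ring
      rw [e0, hYent i i, if_pos rfl, ← Complex.ofReal_mul]
      congr 1
      rcases (hμ0 i).eq_or_lt with h | h
      · simp [hsqdef, ← h]
      · have hs : sq i ≠ 0 := by simp only [hsqdef]; positivity
        rw [← hsqsq i]
        field_simp
    have e2 : ∑ q, (starRingEnd ℂ) (w i q) * Y q i = ∑ t, (p t : ℂ) * c t i * d t i := by
      calc ∑ q, (starRingEnd ℂ) (w i q) * Y q i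
          = ∑ q, ∑ t, (p t : ℂ) * ((starRingEnd ℂ) (w i q) * a t q) * d t i := by
            apply Finset.sum_congr rfl
            intro q _
            rw [hYexp q i, Finset.mul_sum]
            apply Finset.sum_congr rfl
            intro t _
            ring
        _ = ∑ t, ∑ q, (p t : ℂ) * ((starRingEnd ℂ) (w i q) * a t q) * d t i := Finset.sum_comm
        _ = ∑ t, (p t : ℂ) * c t i * d t i := by
            apply Finset.sum_congr rfl
            intro t _
            rw [hcdef]
            simp only [Finset.sum_mul, Finset.mul_sum]
    rw [← e2, e1]
  have step_i : ∀ i, sq i ≤ ∑ t, p t * (‖c t i‖ * ‖d t i‖) := by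
    intro i
    calc sq i = (((sq i : ℝ) : ℂ)).re := by simp
      _ = (∑ t, (p t : ℂ) * c t i * d t i).re := by rw [key1]
      _ ≤ ‖∑ t, (p t : ℂ) * c t i * d t i‖ := Complex.re_le_norm _
      _ ≤ ∑ t, ‖(p t : ℂ) * c t i * d t i‖ :=
          norm_sum_le _ _
      _ = ∑ t, p t * (‖c t i‖ * ‖d t i‖) := by
          apply Finset.sum_congr rfl
          intro t _
          rw [norm_mul, norm_mul, Complex.norm_real, Real.norm_eq_abs, abs_of_nonneg (hp t)]
          ring
  have htn : traceNorm X = ∑ i, sq i := rfl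
  rw [htn]
  calc ∑ i, sq i ≤ ∑ i, ∑ t, p t * (‖c t i‖ * ‖d t i‖) :=
        Finset.sum_le_sum fun i _ => step_i i
    _ = ∑ t, ∑ i, p t * (‖c t i‖ * ‖d t i‖) := Finset.sum_comm
    _ = ∑ t, p t * ∑ i, ‖c t i‖ * ‖d t i‖ := by
        simp [Finset.mul_sum]
    _ ≤ ∑ t, p t * (Real.sqrt (∑ i, Complex.normSq (a t i)) *
        Real.sqrt (∑ j, Complex.normSq (b t j))) := by
        apply Finset.sum_le_sum
        intro t _
        apply mul_le_mul_of_nonneg_left _ (hp t)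
        -- Cauchy-Schwarz then Bessel/Parseval
        have hcs : ∑ i, ‖c t i‖ * ‖d t i‖ ≤
            Real.sqrt (∑ i, Complex.normSq (c t i)) * Real.sqrt (∑ i, Complex.normSq (d t i)) := by
          have h2 := Finset.sum_mul_sq_le_sq_mul_sq Finset.univ
            (fun i => ‖c t i‖) (fun i => ‖d t i‖)
          have hnn : (0:ℝ) ≤ ∑ i, ‖c t i‖ * ‖d t i‖ :=
            Finset.sum_nonneg fun i _ => mul_nonneg (norm_nonneg _) (norm_nonneg _)
          have key : (∑ i, ‖c t i‖ * ‖d t i‖)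
              ≤ Real.sqrt ((∑ i, ‖c t i‖ ^ 2) * (∑ i, ‖d t i‖ ^ 2)) := by
            rw [← Real.sqrt_sq hnn]
            exact Real.sqrt_le_sqrt h2
          rw [Real.sqrt_mul (by positivity)] at key
          simpa [Complex.sq_norm] using key
        have hb := bessel_sums (fun i => 0 < μ i) w (a t) hww hw0
        have hpv := parseval_sums V hV2 (b t)
        refine le_trans hcs ?_
        have h1 : Real.sqrt (∑ i, Complex.normSq (c t i))
            ≤ Real.sqrt (∑ q, Complex.normSq (a t q)) := Real.sqrt_le_sqrt hb
        have h2' : (∑ i, Complex.normSq (d t i)) = ∑ j, Complex.normSq (b t j) := hpv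
        rw [h2']
        exact mul_le_mul_of_nonneg_right h1 (Real.sqrt_nonneg _)

lemma trace_sq_le_one {d : Type*} [Fintype d] [DecidableEq d]
    (τ : Matrix d d ℂ) (hpsd : τ.PosSemidef) (htr : τ.trace = 1) :
    ∃ P : ℝ, ((τ * τ).trace = (P : ℂ)) ∧ P ≤ 1 := by
  classical
  have hherm := hpsd.1
  set V : Matrix d d ℂ := (hherm.eigenvectorUnitary : Matrix d d ℂ) with hVdef
  set μ : d → ℝ := hherm.eigenvalues with hμdef
  have hμ0 : ∀ i, 0 ≤ μ i := hpsd.eigenvalues_nonneg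
  have hV1 : Vᴴ * V = 1 := by
    simpa [Matrix.star_eq_conjTranspose] using (Unitary.coe_star_mul_self hherm.eigenvectorUnitary)
  have hspec : τ = V * Matrix.diagonal (fun i => (μ i : ℂ)) * Vᴴ := by
    have h := hherm.spectral_theorem
    rw [Unitary.conjStarAlgAut_apply] at h
    exact h
  set D := Matrix.diagonal (fun i => (μ i : ℂ)) with hDdef
  have h2 : τ * τ = V * (D * D) * Vᴴ := by
    calc τ * τ = V * D * Vᴴ * (V * D * Vᴴ) := by rw [← hspec]
      _ = V * (D * ((Vᴴ * V) * (D * Vᴴ))) := by simp only [Matrix.mul_assoc]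
      _ = V * (D * D) * Vᴴ := by rw [hV1, Matrix.one_mul]; simp only [Matrix.mul_assoc]
  have htr2 : (τ * τ).trace = ∑ i, ((μ i : ℂ)) * (μ i : ℂ) := by
    rw [h2, Matrix.trace_mul_cycle, hV1, Matrix.one_mul, Matrix.diagonal_mul_diagonal,
      Matrix.trace_diagonal]
  have htr1 : (∑ i, μ i : ℝ) = 1 := by
    have : τ.trace = ∑ i, ((μ i : ℝ) : ℂ) := by
      rw [hspec, Matrix.trace_mul_cycle, hV1, Matrix.one_mul, Matrix.trace_diagonal]
    rw [htr] at this
    exact_mod_cast this.symm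
  refine ⟨∑ i, μ i * μ i, ?_, ?_⟩
  · rw [htr2]; push_cast; rfl
  · calc ∑ i, μ i * μ i ≤ ∑ i, μ i * 1 := by
          apply Finset.sum_le_sum
          intro i _
          refine mul_le_mul_of_nonneg_left ?_ (hμ0 i)
          rw [← htr1]
          exact Finset.single_le_sum (fun j _ => hμ0 j) (Finset.mem_univ i)
      _ = 1 := by simp [htr1]

lemma bloch_bound {dd n1 : ℕ} (hd : 0 < dd)
    (l : Fin n1 → Matrix (Fin dd) (Fin dd) ℂ)
    (hherm : ∀ i, (l i).IsHermitian) (htr0 : ∀ i, (l i).trace = 0)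
    (horth : ∀ i j, (l i * l j).trace = if i = j then (2 : ℂ) else 0)
    (τ : Matrix (Fin dd) (Fin dd) ℂ) (hpsd : τ.PosSemidef) (htr : τ.trace = 1) :
    ∑ i, Complex.normSq ((τ * l i).trace) ≤ 2 * ((dd : ℝ) - 1) / dd := by
  classical
  set u : Fin n1 → ℂ := fun i => (τ * l i).trace with hudef
  have hureal : ∀ i, (starRingEnd ℂ) (u i) = u i := by
    intro i
    calc (starRingEnd ℂ) (u i) = ((τ * l i)ᴴ).trace := by
          rw [Matrix.trace_conjTranspose]; rfl
      _ = ((l i)ᴴ * τᴴ).trace := by rw [Matrix.conjTranspose_mul]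
      _ = (l i * τ).trace := by rw [hherm i, hpsd.1]
      _ = u i := Matrix.trace_mul_comm _ _
  have huu : ∀ i, u i * u i = (Complex.normSq (u i) : ℂ) := by
    intro i
    rw [← Complex.mul_conj (u i), hureal i]
  set Q : ℝ := ∑ i, Complex.normSq (u i) with hQdef
  have hQc : ∑ i, u i * u i = ((Q : ℝ) : ℂ) := by
    rw [hQdef]; push_cast
    exact Finset.sum_congr rfl fun i _ => huu i
  set S : Matrix (Fin dd) (Fin dd) ℂ := ∑ i, u i • l i with hSdef
  have hStr : S.trace = 0 := by
    rw [hSdef, Matrix.trace_sum]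
    simp [Matrix.trace_smul, htr0]
  have hτS : (τ * S).trace = ((Q : ℝ) : ℂ) := by
    rw [hSdef, Finset.mul_sum]
    simp only [Matrix.mul_smul, Matrix.trace_sum, Matrix.trace_smul]
    rw [← hQc]
    exact Finset.sum_congr rfl fun i _ => by simp [hudef, smul_eq_mul]
  have hSτ : (S * τ).trace = ((Q : ℝ) : ℂ) := by rw [Matrix.trace_mul_comm, hτS]
  have hSS : (S * S).trace = 2 * ((Q : ℝ) : ℂ) := by
    rw [hSdef, Finset.sum_mul]
    rw [Matrix.trace_sum]
    have : ∀ i, ((u i • l i) * ∑ j, u j • l j).trace = u i * u i * 2 := by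
      intro i
      rw [Finset.mul_sum, Matrix.trace_sum]
      have : ∀ j, ((u i • l i) * (u j • l j)).trace = u i * u j * (if i = j then (2:ℂ) else 0) := by
        intro j
        rw [Matrix.smul_mul, Matrix.mul_smul, smul_smul, Matrix.trace_smul, horth, smul_eq_mul]
      rw [Finset.sum_congr rfl fun j _ => this j]
      simp [mul_ite, mul_zero]
    rw [Finset.sum_congr rfl fun i _ => this i, ← Finset.sum_mul, hQc]
    ring
  obtain ⟨P, hP, hP1⟩ := trace_sq_le_one τ hpsd htr
  set a : ℂ := ((dd : ℂ))⁻¹ with hadef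
  set h : ℂ := (2 : ℂ)⁻¹ with hhdef
  set E : Matrix (Fin dd) (Fin dd) ℂ := τ - a • (1 : Matrix (Fin dd) (Fin dd) ℂ) - h • S
    with hEdef
  have hEherm : Eᴴ = E := by
    have hSh : Sᴴ = S := by
      rw [hSdef, Matrix.conjTranspose_sum]
      apply Finset.sum_congr rfl
      intro i _
      rw [Matrix.conjTranspose_smul, hherm i]
      congr 1
      exact hureal i
    rw [hEdef]
    simp only [Matrix.conjTranspose_sub, Matrix.conjTranspose_smul, Matrix.conjTranspose_one,
      hSh, hpsd.1.eq]
    rw [show star a = a from by simp [hadef], show star h = h from by simp [hhdef]]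
  -- nonnegativity of trace(Eᴴ E)
  have htrEE : ((Eᴴ * E).trace) = ((∑ p, ∑ q, Complex.normSq (E q p) : ℝ) : ℂ) := by
    push_cast
    rw [Matrix.trace]
    simp only [Matrix.diag_apply, Matrix.mul_apply, Matrix.conjTranspose_apply]
    apply Finset.sum_congr rfl
    intro p _
    apply Finset.sum_congr rfl
    intro q _
    rw [Complex.normSq_eq_conj_mul_self]
    rfl
  set R : ℝ := ∑ p, ∑ q, Complex.normSq (E q p) with hRdef
  have hR0 : 0 ≤ R := Finset.sum_nonneg fun p _ => Finset.sum_nonneg fun q _ => Complex.normSq_nonneg _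
  -- expansion
  have hexp : E * E = τ*τ - a•τ - h•(τ*S) - a•τ + (a*a)•(1:Matrix (Fin dd) (Fin dd) ℂ)
      + (a*h)•S - h•(S*τ) + (h*a)•S + (h*h)•(S*S) := by
    rw [hEdef]
    simp only [Matrix.sub_mul, Matrix.mul_sub, Matrix.smul_mul, Matrix.mul_smul, smul_sub,
      smul_add, smul_smul, Matrix.mul_one, Matrix.one_mul]
    abel
  have htrace_one : (1 : Matrix (Fin dd) (Fin dd) ℂ).trace = (dd : ℂ) := by
    simp [Matrix.trace_one]
  have hEE : (E * E).trace = (P : ℂ) - a - h * ((Q:ℝ):ℂ) - a + (a*a) * (dd:ℂ)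
      + 0 - h * ((Q:ℝ):ℂ) + 0 + (h*h) * (2 * ((Q:ℝ):ℂ)) := by
    rw [hexp]
    simp only [Matrix.trace_add, Matrix.trace_sub, Matrix.trace_smul, smul_eq_mul]
    rw [hP, hτS, hSτ, hSS, htr, hStr, htrace_one]
    ring
  -- assemble real identity
  have hdd : (0:ℝ) < (dd:ℝ) := by exact_mod_cast hd
  have hkey : (R : ℂ) = (P : ℂ) - a - h * ((Q:ℝ):ℂ) - a + (a*a) * (dd:ℂ)
      + 0 - h * ((Q:ℝ):ℂ) + 0 + (h*h) * (2 * ((Q:ℝ):ℂ)) := by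
    rw [← htrEE, hEherm]
    exact hEE
  have hreal : R = P - (dd:ℝ)⁻¹ - Q/2 := by
    rw [hadef, hhdef] at hkey
    have h3 : ((R:ℝ):ℂ) = (((P - (dd:ℝ)⁻¹ - Q/2 : ℝ)):ℂ) := by
      rw [hkey]
      have hdd' : ((dd:ℂ)) ≠ 0 := Nat.cast_ne_zero.2 hd.ne'
      push_cast
      field_simp
      ring
    exact_mod_cast h3
  have e2 : 2*((dd:ℝ)-1)/dd = 2 - 2*(dd:ℝ)⁻¹ := by field_simp
  rw [e2]
  linarith [hR0, hP1, hreal]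

/-- **Li's criterion** (Gell-Mann bases, `x = y = n = 1`): for a separable state,
`‖M̂_{1,1}^{(1)}‖_tr ≤ (1/2)√((2 + d_A² − d_A)(2 + d_B² − d_B))`. -/
theorem li_criterion_of_separable
    (dA dB : ℕ) (hdA : 2 ≤ dA) (hdB : 2 ≤ dB)
    (lA : Fin (dA ^ 2 - 1) → Matrix (Fin dA) (Fin dA) ℂ)
    (lB : Fin (dB ^ 2 - 1) → Matrix (Fin dB) (Fin dB) ℂ)
    (hlAherm : ∀ i, (lA i).IsHermitian)
    (hlBherm : ∀ j, (lB j).IsHermitian)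
    (hlAtr : ∀ i, (lA i).trace = 0)
    (hlBtr : ∀ j, (lB j).trace = 0)
    (hlAorth : ∀ i j, (lA i * lA j).trace = if i = j then (2 : ℂ) else 0)
    (hlBorth : ∀ i j, (lB i * lB j).trace = if i = j then (2 : ℂ) else 0)
    (hlAspan : ∀ X : Matrix (Fin dA) (Fin dA) ℂ, X.trace = 0 →
      X ∈ Submodule.span ℂ (Set.range lA))
    (hlBspan : ∀ X : Matrix (Fin dB) (Fin dB) ℂ, X.trace = 0 →
      X ∈ Submodule.span ℂ (Set.range lB))
    (ρ : Matrix (Fin dA × Fin dB) (Fin dA × Fin dB) ℂ)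
    (hρ : IsDensityMatrix ρ)
    (hsep : IsSeparableState dA dB ρ)
    (r : Fin (dA ^ 2 - 1) → ℂ) (s : Fin (dB ^ 2 - 1) → ℂ)
    (T : Matrix (Fin (dA ^ 2 - 1)) (Fin (dB ^ 2 - 1)) ℂ)
    (hexp : ρ = ((dA * dB : ℂ))⁻¹ •
      ((1 : Matrix (Fin dA × Fin dB) (Fin dA × Fin dB) ℂ)
        + ∑ i, r i • (lA i ⊗ₖ (1 : Matrix (Fin dB) (Fin dB) ℂ))
        + ∑ j, s j • ((1 : Matrix (Fin dA) (Fin dA) ℂ) ⊗ₖ lB j)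
        + ∑ i, ∑ j, T i j • (lA i ⊗ₖ lB j)))
 :
    traceNorm (normExtCorrTensor dA dB 1 1 1 r s T) ≤
      (1 / 2) * Real.sqrt ((2 + (dA : ℝ) ^ 2 - dA) * (2 + (dB : ℝ) ^ 2 - dB)) := by
  classical
  obtain ⟨N, p, ρA, ρB, hp0, hp1, hρA, hρB, hρeq⟩ := hsep
  have hdA0 : ((dA:ℂ)) ≠ 0 := Nat.cast_ne_zero.2 (by omega)
  have hdB0 : ((dB:ℂ)) ≠ 0 := Nat.cast_ne_zero.2 (by omega)
  set uA : Fin N → Fin (dA^2-1) → ℂ := fun t i => (ρA t * lA i).trace with huAdef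
  set vB : Fin N → Fin (dB^2-1) → ℂ := fun t j => (ρB t * lB j).trace with hvBdef
  -- trace pairing computed two ways
  have hT1 : ∀ (C : Matrix (Fin dA) (Fin dA) ℂ) (D : Matrix (Fin dB) (Fin dB) ℂ),
      (ρ * (C ⊗ₖ D)).trace = ∑ t, (p t:ℂ) * ((ρA t * C).trace * (ρB t * D).trace) := by
    intro C D
    rw [hρeq]
    simp only [Finset.sum_mul, Matrix.smul_mul, Matrix.trace_sum, Matrix.trace_smul,
      ← Matrix.mul_kronecker_mul, Matrix.trace_kronecker, smul_eq_mul]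
  have hT2 : ∀ (C : Matrix (Fin dA) (Fin dA) ℂ) (D : Matrix (Fin dB) (Fin dB) ℂ),
      (ρ * (C ⊗ₖ D)).trace = ((dA:ℂ) * (dB:ℂ))⁻¹ * ( C.trace * D.trace
        + (∑ i, r i * ((lA i * C).trace * D.trace))
        + (∑ j, s j * (C.trace * (lB j * D).trace))
        + ∑ i, ∑ j, T i j * ((lA i * C).trace * (lB j * D).trace) ) := by
    intro C D
    rw [hexp]
    simp only [Matrix.smul_mul, Matrix.trace_smul, Matrix.add_mul, Matrix.one_mul,
      Finset.sum_mul, Matrix.trace_add, Matrix.trace_sum, ← Matrix.mul_kronecker_mul,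
      Matrix.mul_one, Matrix.trace_kronecker, smul_eq_mul]
  have htrρB : ∀ t, (ρB t).trace = 1 := fun t => (hρB t).2
  have htrρA : ∀ t, (ρA t).trace = 1 := fun t => (hρA t).2
  -- extraction of r
  have e_r : ∀ i, r i = (dA:ℂ)/2 * ∑ t, (p t:ℂ) * uA t i := by
    intro i
    have h1 := hT1 (lA i) 1
    have h2 := hT2 (lA i) 1
    rw [h1] at h2
    simp only [Matrix.mul_one, Matrix.trace_one, Fintype.card_fin, hlAtr, hlAorth, hlBtr,
      zero_mul, mul_zero, Finset.sum_const_zero, add_zero, zero_add, ite_mul, mul_ite,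
      Finset.sum_ite_eq', Finset.mem_univ, if_true, htrρB, mul_one] at h2
    show r i = (dA:ℂ)/2 * ∑ t, (p t:ℂ) * (ρA t * lA i).trace
    rw [h2]
    field_simp
  have e_s : ∀ j, s j = (dB:ℂ)/2 * ∑ t, (p t:ℂ) * vB t j := by
    intro j
    have h1 := hT1 1 (lB j)
    have h2 := hT2 1 (lB j)
    rw [h1] at h2
    simp only [Matrix.mul_one, Matrix.one_mul, Matrix.trace_one, Fintype.card_fin, hlAtr,
      hlBorth, hlBtr, zero_mul, mul_zero, Finset.sum_const_zero, add_zero, zero_add, ite_mul,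
      mul_ite, Finset.sum_ite_eq', Finset.mem_univ, if_true, htrρA, one_mul, mul_one] at h2
    show s j = (dB:ℂ)/2 * ∑ t, (p t:ℂ) * (ρB t * lB j).trace
    rw [h2]
    field_simp
  have e_T : ∀ i j, T i j = (dA:ℂ)*(dB:ℂ)/4 * ∑ t, (p t:ℂ) * (uA t i * vB t j) := by
    intro i j
    have h1 := hT1 (lA i) (lB j)
    have h2 := hT2 (lA i) (lB j)
    rw [h1] at h2
    simp only [Matrix.mul_one, Matrix.one_mul, Matrix.trace_one, Fintype.card_fin, hlAtr,
      hlAorth, hlBorth, hlBtr, zero_mul, mul_zero, Finset.sum_const_zero, add_zero, zero_add,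
      ite_mul, mul_ite, Finset.sum_ite_eq', Finset.mem_univ, if_true] at h2
    show T i j = (dA:ℂ)*(dB:ℂ)/4 * ∑ t, (p t:ℂ) * ((ρA t * lA i).trace * (ρB t * lB j).trace)
    rw [h2]
    field_simp
    ring
  -- Bloch vector bounds
  have hbA : ∀ t, ∑ i, Complex.normSq (uA t i) ≤ 2 * ((dA:ℝ) - 1)/dA := fun t =>
    bloch_bound (by omega) lA hlAherm hlAtr hlAorth (ρA t) (hρA t).1 (hρA t).2
  have hbB : ∀ t, ∑ j, Complex.normSq (vB t j) ≤ 2 * ((dB:ℝ) - 1)/dB := fun t =>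
    bloch_bound (by omega) lB hlBherm hlBtr hlBorth (ρB t) (hρB t).1 (hρB t).2
  set aV : Fin N → (Fin 1 ⊕ Fin (dA^2-1)) → ℂ :=
    fun t => Sum.elim (fun _ => 1) (fun i => (dA:ℂ)/2 * uA t i) with haVdef
  set bV : Fin N → (Fin 1 ⊕ Fin (dB^2-1)) → ℂ :=
    fun t => Sum.elim (fun _ => 1) (fun j => (dB:ℂ)/2 * vB t j) with hbVdef
  have hXent : ∀ i j, normExtCorrTensor dA dB 1 1 1 r s T i j
      = ∑ t, (p t:ℂ) * aV t i * bV t j := by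
    intro i j
    cases i with
    | inl i0 =>
      cases j with
      | inl j0 =>
        simp only [normExtCorrTensor, Matrix.fromBlocks_apply₁₁, Matrix.of_apply,
          haVdef, hbVdef, Sum.elim_inl, mul_one]
        norm_num
        exact_mod_cast hp1.symm
      | inr j1 =>
        simp only [normExtCorrTensor, Matrix.fromBlocks_apply₁₂, Matrix.of_apply,
          haVdef, hbVdef, Sum.elim_inl, Sum.elim_inr]
        norm_num
        rw [e_s j1, Finset.mul_sum]
        exact Finset.sum_congr rfl fun t _ => by ring
    | inr i1 =>
      cases j with
      | inl j0 =>
        simp only [normExtCorrTensor, Matrix.fromBlocks_apply₂₁, Matrix.of_apply,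
          haVdef, hbVdef, Sum.elim_inl, Sum.elim_inr]
        norm_num
        rw [e_r i1, Finset.mul_sum]
        exact Finset.sum_congr rfl fun t _ => by ring
      | inr j1 =>
        simp only [normExtCorrTensor, Matrix.fromBlocks_apply₂₂, Matrix.of_apply,
          haVdef, hbVdef, Sum.elim_inr]
        rw [e_T i1 j1, Finset.mul_sum]
        exact Finset.sum_congr rfl fun t _ => by ring
  have hmain := traceNorm_sum_le p hp0 aV bV (normExtCorrTensor dA dB 1 1 1 r s T) hXent
  set CA : ℝ := (2 + (dA:ℝ)^2 - dA)/2 with hCAdef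
  set CB : ℝ := (2 + (dB:ℝ)^2 - dB)/2 with hCBdef
  have hdA2 : (2:ℝ) ≤ (dA:ℝ) := by exact_mod_cast hdA
  have hdB2 : (2:ℝ) ≤ (dB:ℝ) := by exact_mod_cast hdB
  have hCA0 : 0 ≤ CA := by rw [hCAdef]; nlinarith
  have hCB0 : 0 ≤ CB := by rw [hCBdef]; nlinarith
  have hdAne : ((dA:ℝ)) ≠ 0 := by positivity
  have hdBne : ((dB:ℝ)) ≠ 0 := by positivity
  have hsuma : ∀ t, ∑ i, Complex.normSq (aV t i) ≤ CA := by
    intro t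
    rw [Fintype.sum_sum_type]
    have h1 : ∑ (i0 : Fin 1), Complex.normSq (aV t (Sum.inl i0)) = 1 := by
      simp [haVdef]
    have h2 : ∀ i, Complex.normSq (aV t (Sum.inr i))
        = (dA:ℝ)/2 * ((dA:ℝ)/2) * Complex.normSq (uA t i) := by
      intro i
      have hc : ((dA:ℂ)/2) = (((dA:ℝ)/2 : ℝ):ℂ) := by push_cast; ring
      simp only [haVdef, Sum.elim_inr, Complex.normSq_mul, hc, Complex.normSq_ofReal]
    rw [h1, Finset.sum_congr rfl fun i _ => h2 i, ← Finset.mul_sum]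
    have hk : (0:ℝ) ≤ (dA:ℝ)/2 * ((dA:ℝ)/2) := by positivity
    have h5 := mul_le_mul_of_nonneg_left (hbA t) hk
    have heq : 1 + (dA:ℝ)/2 * ((dA:ℝ)/2) * (2*((dA:ℝ)-1)/dA) = CA := by
      rw [hCAdef]; field_simp; ring
    linarith
  have hsumb : ∀ t, ∑ j, Complex.normSq (bV t j) ≤ CB := by
    intro t
    rw [Fintype.sum_sum_type]
    have h1 : ∑ (i0 : Fin 1), Complex.normSq (bV t (Sum.inl i0)) = 1 := by
      simp [hbVdef]
    have h2 : ∀ j, Complex.normSq (bV t (Sum.inr j))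
        = (dB:ℝ)/2 * ((dB:ℝ)/2) * Complex.normSq (vB t j) := by
      intro j
      have hc : ((dB:ℂ)/2) = (((dB:ℝ)/2 : ℝ):ℂ) := by push_cast; ring
      simp only [hbVdef, Sum.elim_inr, Complex.normSq_mul, hc, Complex.normSq_ofReal]
    rw [h1, Finset.sum_congr rfl fun j _ => h2 j, ← Finset.mul_sum]
    have hk : (0:ℝ) ≤ (dB:ℝ)/2 * ((dB:ℝ)/2) := by positivity
    have h5 := mul_le_mul_of_nonneg_left (hbB t) hk
    have heq : 1 + (dB:ℝ)/2 * ((dB:ℝ)/2) * (2*((dB:ℝ)-1)/dB) = CB := by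
      rw [hCBdef]; field_simp; ring
    linarith
  have hstep : ∀ t, p t * (Real.sqrt (∑ i, Complex.normSq (aV t i)) *
      Real.sqrt (∑ j, Complex.normSq (bV t j))) ≤ p t * (Real.sqrt CA * Real.sqrt CB) := by
    intro t
    apply mul_le_mul_of_nonneg_left _ (hp0 t)
    exact mul_le_mul (Real.sqrt_le_sqrt (hsuma t)) (Real.sqrt_le_sqrt (hsumb t))
      (Real.sqrt_nonneg _) (Real.sqrt_nonneg _)
  have hfinal : traceNorm (normExtCorrTensor dA dB 1 1 1 r s T)
      ≤ Real.sqrt CA * Real.sqrt CB := by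
    calc traceNorm (normExtCorrTensor dA dB 1 1 1 r s T)
        ≤ ∑ t, p t * (Real.sqrt (∑ i, Complex.normSq (aV t i)) *
            Real.sqrt (∑ j, Complex.normSq (bV t j))) := hmain
      _ ≤ ∑ t, p t * (Real.sqrt CA * Real.sqrt CB) :=
          Finset.sum_le_sum fun t _ => hstep t
      _ = (∑ t, p t) * (Real.sqrt CA * Real.sqrt CB) := by rw [Finset.sum_mul]
      _ = Real.sqrt CA * Real.sqrt CB := by rw [hp1, one_mul]
  refine le_trans hfinal (le_of_eq ?_)
  rw [← Real.sqrt_mul hCA0]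
  have hXY : CA * CB = ((2 + (dA:ℝ)^2 - dA) * (2 + (dB:ℝ)^2 - dB)) * (1/2)^2 := by
    rw [hCAdef, hCBdef]; ring
  rw [hXY, Real.sqrt_mul (by nlinarith), Real.sqrt_sq (by norm_num)]
  ring
end

section
/- Let ρ be a separable bipartite density matrix on ℂ^{d_A}⊗ℂ^{d_B}, and take the (non-identity) Heisenberg–Weyl operators (so κ_A = d_A, κ_B = d_B) as the traceless orthogonal bases. Then for all real x, y ≥ 0 and every positive integer n, the normalized extended correlation tensor satisfies ‖M̂_{x,y}^{(n)}‖_tr ≤ √( (n x² + d_A − 1)(n y² + d_B − 1) ). -/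
open Matrix BigOperators Kronecker
open scoped ComplexOrder

/-- The Heisenberg–Weyl operator `W(l,m) = Σ_k exp(2πikl/d) |k⟩⟨(k+m) mod d|` on `ℂ^d`. -/
noncomputable def heisenbergWeyl (d : ℕ) (l m : ℕ) : Matrix (Fin d) (Fin d) ℂ :=
  Matrix.of fun i j =>
    if (j : ℕ) = ((i : ℕ) + m) % d then
      Complex.exp (2 * Real.pi * Complex.I * (i : ℕ) * l / d) else 0

/-- The index set of non-identity Heisenberg–Weyl operators: pairs `(l,m) ≠ (0,0)`. -/
def HWIdx (d : ℕ) : Type := {p : Fin d × Fin d // (p.1 : ℕ) ≠ 0 ∨ (p.2 : ℕ) ≠ 0}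

instance (d : ℕ) : Fintype (HWIdx d) := Subtype.fintype _
instance (d : ℕ) : DecidableEq (HWIdx d) := Subtype.instDecidableEq

section Aux

set_option linter.unusedSectionVars false

lemma rou_sum (d : ℕ) (hd : 0 < d) (a : ℤ) :
    ∑ k : Fin d, Complex.exp (2 * Real.pi * Complex.I * (k : ℕ) * a / d)
      = if (d : ℤ) ∣ a then (d : ℂ) else 0 := by
  have hdc : (d : ℂ) ≠ 0 := Nat.cast_ne_zero.mpr hd.ne'
  have h2 : (2:ℂ) * ↑Real.pi * Complex.I ≠ 0 := by
    simp [Real.pi_ne_zero, Complex.I_ne_zero]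
  set ζ : ℂ := Complex.exp (2 * Real.pi * Complex.I * a / d) with hζ
  have hterm : ∀ k : Fin d, Complex.exp (2 * Real.pi * Complex.I * (k : ℕ) * a / d) = ζ ^ (k : ℕ) := by
    intro k
    rw [hζ, ← Complex.exp_nat_mul]
    ring_nf
  rw [Finset.sum_congr rfl (fun k _ => hterm k)]
  by_cases h : (d : ℤ) ∣ a
  · obtain ⟨c, rfl⟩ := h
    have : ζ = 1 := by
      rw [hζ]
      have : 2 * (Real.pi:ℂ) * Complex.I * (↑(↑d * c : ℤ)) / d = c * (2 * Real.pi * Complex.I) := by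
        push_cast
        field_simp
      rw [this, Complex.exp_int_mul_two_pi_mul_I]
    simp [this, if_pos (dvd_mul_right (d:ℤ) c)]
  · have hζd : ζ ^ d = 1 := by
      rw [hζ, ← Complex.exp_nat_mul]
      have : (d : ℂ) * (2 * Real.pi * Complex.I * a / d) = a * (2 * Real.pi * Complex.I) := by
        field_simp
      rw [this, Complex.exp_int_mul_two_pi_mul_I]
    have hζ1 : ζ ≠ 1 := by
      intro h1
      rw [hζ, Complex.exp_eq_one_iff] at h1
      obtain ⟨n, hn⟩ := h1
      apply h
      refine ⟨n, ?_⟩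
      have hc : (a : ℂ) = d * n := by
        apply mul_left_cancel₀ h2
        field_simp at hn
        linear_combination (2 * ↑Real.pi * Complex.I) * hn
      exact_mod_cast hc
    rw [Fin.sum_univ_eq_sum_range, geom_sum_eq hζ1, hζd]
    simp [h]


lemma hw_orth (d : ℕ) (hd : 0 < d) (l m l' m' : Fin d) :
    ((heisenbergWeyl d (l:ℕ) (m:ℕ))ᴴ * heisenbergWeyl d (l':ℕ) (m':ℕ)).trace
      = if l = l' ∧ m = m' then (d:ℂ) else 0 := by
  classical
  have key : ∀ (k : Fin d), ((k:ℕ) + (m:ℕ)) % d = ((k:ℕ) + (m':ℕ)) % d → m = m' := by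
    intro k h
    have h2 : (m:ℕ) ≡ (m':ℕ) [MOD d] := Nat.ModEq.add_left_cancel' (k:ℕ) h
    have : (m:ℕ) % d = (m':ℕ) % d := h2
    rw [Nat.mod_eq_of_lt m.isLt, Nat.mod_eq_of_lt m'.isLt] at this
    exact Fin.ext this
  rw [Matrix.trace]
  simp only [Matrix.diag_apply, Matrix.mul_apply, Matrix.conjTranspose_apply,
    heisenbergWeyl, Matrix.of_apply]
  by_cases hm : m = m'
  · subst hm
    rw [Finset.sum_comm]
    have inner : ∀ k : Fin d,
        (∑ i : Fin d, star (if (i:ℕ) = ((k:ℕ) + (m:ℕ)) % d then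
            Complex.exp (2 * Real.pi * Complex.I * (k:ℕ) * (l:ℕ) / d) else 0) *
          (if (i:ℕ) = ((k:ℕ) + (m:ℕ)) % d then
            Complex.exp (2 * Real.pi * Complex.I * (k:ℕ) * (l':ℕ) / d) else 0))
        = Complex.exp (2 * Real.pi * Complex.I * (k:ℕ) * (((l':ℤ) - (l:ℤ)) : ℤ) / d) := by
      intro k
      rw [Finset.sum_eq_single (⟨((k:ℕ) + (m:ℕ)) % d, Nat.mod_lt _ hd⟩ : Fin d)]
      · simp only [if_pos rfl, if_true, Complex.star_def]
        rw [← Complex.exp_conj, ← Complex.exp_add]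
        congr 1
        have : (starRingEnd ℂ) (2 * ↑Real.pi * Complex.I * (k:ℕ) * (l:ℕ) / d)
            = -(2 * ↑Real.pi * Complex.I * (k:ℕ) * (l:ℕ) / d) := by
          simp only [map_div₀, _root_.map_mul, Complex.conj_I, map_ofNat,
            Complex.conj_ofReal, Complex.conj_natCast]
          ring
        rw [this]
        push_cast
        ring
      · intro i _ hne
        have : ¬ ((i:ℕ) = ((k:ℕ) + (m:ℕ)) % d) := by
          intro h; apply hne; exact Fin.ext h
        simp [this]
      · intro h; exact absurd (Finset.mem_univ _) h
    rw [Finset.sum_congr rfl (fun k _ => inner k), rou_sum d hd ((l':ℤ) - (l:ℤ))]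
    have : ((d:ℤ) ∣ ((l':ℤ) - (l:ℤ))) ↔ l = l' := by
      constructor
      · intro hdvd
        have h1 : ((l':ℤ) - (l:ℤ)) = 0 := by
          refine Int.eq_zero_of_abs_lt_dvd hdvd ?_
          have hl : ((l:ℤ)) < d := by exact_mod_cast l.isLt
          have hl' : ((l':ℤ)) < d := by exact_mod_cast l'.isLt
          have hl0 : (0:ℤ) ≤ l := by positivity
          have hl'0 : (0:ℤ) ≤ l' := by positivity
          rw [abs_lt]
          omega
        have : (l':ℤ) = (l:ℤ) := by omega
        exact (Fin.ext (by exact_mod_cast this)).symm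
      · rintro rfl; simp
    rw [if_congr this rfl rfl]
    by_cases hll : l = l' <;> simp [hll]
  · rw [if_neg (by tauto)]
    apply Finset.sum_eq_zero; intro i _
    apply Finset.sum_eq_zero; intro k _
    by_cases hP : (i:ℕ) = ((k:ℕ) + (m:ℕ)) % d
    · by_cases hQ : (i:ℕ) = ((k:ℕ) + (m':ℕ)) % d
      · exact absurd (key k (hP ▸ hQ)) hm
      · simp [hQ]
    · simp [hP]


lemma hw_zero_zero (d : ℕ) : heisenbergWeyl d 0 0 = 1 := by
  ext i j
  simp only [heisenbergWeyl, Matrix.of_apply, Matrix.one_apply, Nat.add_zero,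
    Nat.mod_eq_of_lt i.isLt, Nat.cast_zero, mul_zero, zero_div, Complex.exp_zero]
  by_cases h : j = i
  · simp [h]
  · rw [if_neg (fun hc => h (Fin.ext hc)), if_neg (fun hc => h hc.symm)]


variable {d : Type*} [Fintype d] [DecidableEq d]

lemma trace_conjTranspose_mul_eq_sum (A B : Matrix d d ℂ) :
    (Aᴴ * B).trace = ∑ q : d × d, (starRingEnd ℂ) (A q.1 q.2) * B q.1 q.2 := by
  rw [Matrix.trace, Fintype.sum_prod_type]
  simp only [Matrix.diag_apply, Matrix.mul_apply, Matrix.conjTranspose_apply]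
  rw [Finset.sum_comm]
  simp [Complex.star_def]


lemma sum_sq_eigenvalues_le_one (ρ : Matrix d d ℂ) (hρ : ρ.PosSemidef)
    (htr : ρ.trace = 1) : (ρ * ρ).trace = ((∑ i, (hρ.1.eigenvalues i)^2 : ℝ) : ℂ) ∧
      (∑ i, (hρ.1.eigenvalues i)^2 : ℝ) ≤ 1 := by
  have hH := hρ.1
  set V : Matrix d d ℂ := (hH.eigenvectorUnitary : Matrix d d ℂ) with hV
  have hU : star V * V = 1 := (Matrix.mem_unitaryGroup_iff').mp hH.eigenvectorUnitary.2
  set D : Matrix d d ℂ := Matrix.diagonal (RCLike.ofReal ∘ hH.eigenvalues) with hD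
  have spec : ρ = V * D * star V := hH.spectral_theorem
  have htrD : ∀ (M : Matrix d d ℂ), (V * M * star V).trace = M.trace := by
    intro M
    rw [Matrix.trace_mul_cycle, hU, Matrix.one_mul]
  have hsum : (∑ i, (hρ.1.eigenvalues i) : ℝ) = 1 := by
    have : ρ.trace = ((∑ i, (hρ.1.eigenvalues i) : ℝ) : ℂ) := by
      conv_lhs => rw [spec, htrD, hD, Matrix.trace_diagonal]
      push_cast
      rfl
    rw [htr] at this
    exact_mod_cast this.symm
  constructor
  · have : ρ * ρ = V * (D * D) * star V := by
      rw [spec]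
      calc V * D * star V * (V * D * star V)
          = V * D * (star V * V) * D * star V := by
            simp only [Matrix.mul_assoc]
        _ = V * (D * D) * star V := by rw [hU]; simp only [Matrix.mul_one, Matrix.mul_assoc]
    conv_lhs => rw [this, htrD, hD, Matrix.diagonal_mul_diagonal, Matrix.trace_diagonal]
    push_cast
    simp [pow_two]
  · have hnn : ∀ i, 0 ≤ hρ.1.eigenvalues i := fun i => hρ.eigenvalues_nonneg i
    have hle : ∀ i, hρ.1.eigenvalues i ≤ 1 := by
      intro i
      rw [← hsum]
      exact Finset.single_le_sum (fun j _ => hnn j) (Finset.mem_univ i)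
    calc (∑ i, (hρ.1.eigenvalues i)^2 : ℝ) ≤ ∑ i, hρ.1.eigenvalues i := by
          apply Finset.sum_le_sum
          intro i _
          nlinarith [hnn i, hle i]
      _ = 1 := hsum


lemma bessel_bound (d : ℕ) (hd : 0 < d) (ρ : Matrix (Fin d) (Fin d) ℂ)
    (hρ : ρ.PosSemidef) (htr : ρ.trace = 1) :
    ∑ i : {p : Fin d × Fin d // (p.1 : ℕ) ≠ 0 ∨ (p.2 : ℕ) ≠ 0},
      ‖(ρ * (heisenbergWeyl d (i.1.1:ℕ) (i.1.2:ℕ))ᴴ).trace‖^2 ≤ (d:ℝ) - 1 := by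
  classical
  have hds : Real.sqrt d ≠ 0 := by positivity
  have hdc : (d:ℝ) ≠ 0 := by positivity
  -- the orthonormal family
  set v : Fin d × Fin d → EuclideanSpace ℂ (Fin d × Fin d) :=
    fun p => WithLp.toLp 2 (fun q : Fin d × Fin d => ((Real.sqrt d : ℝ) : ℂ)⁻¹ * heisenbergWeyl d (p.1:ℕ) (p.2:ℕ) q.1 q.2)
    with hv
  have sqc : ((Real.sqrt d : ℝ) : ℂ)⁻¹ * ((Real.sqrt d : ℝ) : ℂ)⁻¹ = ((d:ℝ):ℂ)⁻¹ := by
    rw [← mul_inv]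
    norm_cast
    rw [Real.mul_self_sqrt (by positivity)]
  have hinner : ∀ p p' : Fin d × Fin d, ∀ (w : EuclideanSpace ℂ (Fin d × Fin d)),
      (inner ℂ (v p) w : ℂ) = ((Real.sqrt d : ℝ) : ℂ)⁻¹ *
        ((heisenbergWeyl d (p.1:ℕ) (p.2:ℕ))ᴴ * Matrix.of (fun a b => w (a, b))).trace := by
    intro p p' w
    rw [PiLp.inner_apply, trace_conjTranspose_mul_eq_sum, Finset.mul_sum]
    apply Finset.sum_congr rfl
    intro q _
    simp only [hv, RCLike.inner_apply', _root_.map_mul, Matrix.of_apply]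
    rw [map_inv₀, Complex.conj_ofReal]
    ring
  have horth : Orthonormal ℂ v := by
    rw [orthonormal_iff_ite]
    intro p p'
    rw [hinner p p' (v p')]
    have : Matrix.of (fun a b => v p' (a, b)) =
        ((Real.sqrt d : ℝ) : ℂ)⁻¹ • heisenbergWeyl d (p'.1:ℕ) (p'.2:ℕ) := by
      ext a b
      simp [hv]
    rw [this, Matrix.mul_smul, Matrix.trace_smul, smul_eq_mul, ← mul_assoc, sqc,
      hw_orth d hd p.1 p.2 p'.1 p'.2]
    by_cases h : p = p'
    · rw [if_pos h, if_pos ⟨congrArg Prod.fst h, congrArg Prod.snd h⟩]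
      field_simp
      norm_cast
    · rw [if_neg h, if_neg (fun hc => h (Prod.ext hc.1 hc.2)), mul_zero]
  -- Bessel
  set x : EuclideanSpace ℂ (Fin d × Fin d) := WithLp.toLp 2 (fun q : Fin d × Fin d => ρ q.1 q.2) with hx
  have hbessel := horth.sum_inner_products_le (s := Finset.univ) x
  have hofx : Matrix.of (fun a b => x (a, b)) = ρ := by ext a b; simp [hx]
  have hterm : ∀ p : Fin d × Fin d,
      ‖(inner ℂ (v p) x : ℂ)‖^2 = ‖((heisenbergWeyl d (p.1:ℕ) (p.2:ℕ))ᴴ * ρ).trace‖^2 / d := by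
    intro p
    rw [hinner p p x, hofx, norm_mul, mul_pow]
    have : ‖((Real.sqrt d : ℝ) : ℂ)⁻¹‖^2 = (d:ℝ)⁻¹ := by
      rw [norm_inv, Complex.norm_real, Real.norm_eq_abs, abs_of_nonneg (Real.sqrt_nonneg _),
        ← Real.sqrt_inv, Real.sq_sqrt (by positivity)]
    rw [this]
    ring
  have hnormx : ‖x‖^2 ≤ 1 := by
    have h1 : ‖x‖^2 = ∑ q : Fin d × Fin d, ‖x q‖^2 := by
      rw [EuclideanSpace.norm_eq, Real.sq_sqrt]
      positivity
    have h2 : ((ρᴴ * ρ).trace) = ((∑ q : Fin d × Fin d, ‖x q‖^2 : ℝ) : ℂ) := by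
      rw [trace_conjTranspose_mul_eq_sum]
      push_cast
      apply Finset.sum_congr rfl
      intro q _
      rw [hx]
      rw [Complex.conj_mul']
    obtain ⟨he, hle⟩ := sum_sq_eigenvalues_le_one ρ hρ htr
    rw [hρ.1.eq] at h2  -- ρᴴ = ρ? IsHermitian: Aᴴ = A
    rw [he] at h2
    have : (∑ q : Fin d × Fin d, ‖x q‖^2 : ℝ) = (∑ i, (hρ.1.eigenvalues i)^2 : ℝ) := by
      exact_mod_cast h2.symm
    rw [h1, this]
    exact hle
  -- split the sum
  set P : Fin d × Fin d → Prop := fun p => (p.1 : ℕ) ≠ 0 ∨ (p.2 : ℕ) ≠ 0 with hP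
  set F : Fin d × Fin d → ℝ := fun p => ‖((heisenbergWeyl d (p.1:ℕ) (p.2:ℕ))ᴴ * ρ).trace‖^2 / d
    with hF
  have hsplit : ∑ p : Fin d × Fin d, F p
      = (∑ p ∈ Finset.univ.filter P, F p) + (∑ p ∈ Finset.univ.filter (fun p => ¬ P p), F p) :=
    (Finset.sum_filter_add_sum_filter_not _ _ _).symm
  have hfilter : Finset.univ.filter (fun p => ¬ P p) = {((⟨0, hd⟩ : Fin d), (⟨0, hd⟩ : Fin d))} := by
    ext p
    simp only [Finset.mem_filter, Finset.mem_univ, true_and, Finset.mem_singleton, hP]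
    constructor
    · intro h
      push_neg at h
      exact Prod.ext (Fin.ext h.1) (Fin.ext h.2)
    · intro h
      subst h
      simp
  have hp0 : F ((⟨0, hd⟩ : Fin d), (⟨0, hd⟩ : Fin d)) = 1/d := by
    rw [hF]
    simp only []
    have h00 : heisenbergWeyl d ((⟨0, hd⟩ : Fin d) : ℕ) ((⟨0, hd⟩ : Fin d) : ℕ) = 1 := hw_zero_zero d
    rw [h00]
    rw [Matrix.conjTranspose_one, Matrix.one_mul, htr]
    norm_num
  have hsub : ∑ p ∈ Finset.univ.filter P, F p
      = ∑ i : {p : Fin d × Fin d // (p.1 : ℕ) ≠ 0 ∨ (p.2 : ℕ) ≠ 0}, F i.1 := by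
    rw [Finset.sum_subtype (p := fun p : Fin d × Fin d => (p.1 : ℕ) ≠ 0 ∨ (p.2 : ℕ) ≠ 0)
      (Finset.univ.filter P) (fun x => by simp [hP]) F]
  have hmain : ∑ p : Fin d × Fin d, F p ≤ 1 := by
    calc ∑ p : Fin d × Fin d, F p = ∑ p : Fin d × Fin d, ‖(inner ℂ (v p) x : ℂ)‖^2 := by
          apply Finset.sum_congr rfl
          intro p _
          rw [hterm p, hF]
      _ ≤ ‖x‖^2 := hbessel
      _ ≤ 1 := hnormx
  rw [hsplit, hfilter, Finset.sum_singleton, hp0, hsub] at hmain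
  have htr_comm : ∀ i : {p : Fin d × Fin d // (p.1 : ℕ) ≠ 0 ∨ (p.2 : ℕ) ≠ 0},
      ‖(ρ * (heisenbergWeyl d (i.1.1:ℕ) (i.1.2:ℕ))ᴴ).trace‖^2 = F i.1 * d := by
    intro i
    rw [hF]
    simp only []
    rw [Matrix.trace_mul_comm]
    field_simp
  calc ∑ i : {p : Fin d × Fin d // (p.1 : ℕ) ≠ 0 ∨ (p.2 : ℕ) ≠ 0},
        ‖(ρ * (heisenbergWeyl d (i.1.1:ℕ) (i.1.2:ℕ))ᴴ).trace‖^2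
      = (∑ i : {p : Fin d × Fin d // (p.1 : ℕ) ≠ 0 ∨ (p.2 : ℕ) ≠ 0}, F i.1) * d := by
        rw [Finset.sum_mul]
        exact Finset.sum_congr rfl (fun i _ => htr_comm i)
    _ ≤ (1 - 1/d) * d := by
        apply mul_le_mul_of_nonneg_right _ (by positivity)
        linarith
    _ = d - 1 := by field_simp


noncomputable def toE {α : Type*} [Fintype α] (f : α → ℂ) : EuclideanSpace ℂ α :=
  (WithLp.equiv 2 (α → ℂ)).symm f


@[simp] lemma toE_apply {α : Type*} [Fintype α] (f : α → ℂ) (i : α) : toE f i = f i := rfl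


lemma toE_coe {α : Type*} [Fintype α] (f : α → ℂ) : toE f = f := rfl

variable {ι m k : Type*} [Fintype ι] [Fintype m] [Fintype k] [DecidableEq k] [DecidableEq m]


variable {ι m k : Type*} [Fintype ι] [Fintype m] [Fintype k] [DecidableEq k] [DecidableEq m]

lemma inner_toE_mulVec_right (C : Matrix ι m ℂ) (a : m → ℂ)
    (b : EuclideanSpace ℂ ι) :
    (inner ℂ b (toE (C *ᵥ a)) : ℂ) = inner ℂ (toE (Cᴴ *ᵥ b)) (toE a) := by
  simp only [PiLp.inner_apply, RCLike.inner_apply', toE_apply, Matrix.mulVec, dotProduct,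
    Matrix.conjTranspose_apply, map_sum, _root_.map_mul, Finset.mul_sum, Finset.sum_mul]
  rw [Finset.sum_comm]
  apply Finset.sum_congr rfl
  intro c _
  apply Finset.sum_congr rfl
  intro r _
  simp only [RingHomCompTriple.comp_apply, RingHom.id_apply, Complex.star_def,
    RingHom.id_apply]
  ring_nf


lemma norm_toE_mulVec_sq (C : Matrix ι m ℂ) (w : EuclideanSpace ℂ m) :
    ‖toE (C *ᵥ w)‖^2 = ∑ r : ι, ‖(inner ℂ (toE (star (C r))) w : ℂ)‖^2 := by
  rw [EuclideanSpace.norm_eq, Real.sq_sqrt (by positivity)]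
  apply Finset.sum_congr rfl
  intro r _
  congr 1
  simp only [toE_apply, Matrix.mulVec, dotProduct, PiLp.inner_apply, RCLike.inner_apply',
    Pi.star_apply, Complex.star_def, Complex.conj_conj]


lemma traceNorm_conjTranspose_mul_le (A : Matrix ι m ℂ) (B : Matrix ι k ℂ) :
    traceNorm (Aᴴ * B) ≤
      Real.sqrt (∑ q : ι × m, ‖A q.1 q.2‖^2) * Real.sqrt (∑ q : ι × k, ‖B q.1 q.2‖^2) := by
  classical
  set M : Matrix m k ℂ := Aᴴ * B with hM
  set hH := Matrix.isHermitian_conjTranspose_mul_self M with hhH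
  set lam := hH.eigenvalues with hlam
  have hlamnn : ∀ i, 0 ≤ lam i := (Matrix.posSemidef_conjTranspose_mul_self M).eigenvalues_nonneg
  set v : k → EuclideanSpace ℂ k := fun i => hH.eigenvectorBasis i with hv
  have hvorth : Orthonormal ℂ v := hH.eigenvectorBasis.orthonormal
  set Mv : k → EuclideanSpace ℂ m := fun i => toE (M *ᵥ v i) with hMv
  have hinnerMv : ∀ i j, (inner ℂ (Mv i) (Mv j) : ℂ) = (lam i : ℂ) * inner ℂ (v i) (v j) := by
    intro i j
    rw [hMv]
    simp only []
    rw [inner_toE_mulVec_right M (v j) (toE (M *ᵥ v i))]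
    rw [show toE (v j : k → ℂ) = v j from rfl]
    have h1 : Mᴴ *ᵥ (toE (M *ᵥ v i)) = (Mᴴ * M) *ᵥ (v i) := by
      exact Matrix.mulVec_mulVec _ _ _
    have h2 : (Mᴴ * M) *ᵥ (v i : k → ℂ) = lam i • (v i : k → ℂ) := hH.mulVec_eigenvectorBasis i
    rw [h1, h2]
    have h3 : toE (lam i • (v i : k → ℂ)) = ((lam i : ℂ)) • v i := by
      apply PiLp.ext
      intro a
      simp [toE, Complex.real_smul]
    rw [h3, inner_smul_left, Complex.conj_ofReal]
  have hnormMv_sq : ∀ i, (‖Mv i‖:ℝ)^2 = lam i := by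
    intro i
    have h := hinnerMv i i
    rw [inner_self_eq_norm_sq_to_K, inner_self_eq_norm_sq_to_K, hvorth.1 i] at h
    norm_num at h
    exact_mod_cast h
  have hnormMv : ∀ i, ‖Mv i‖ = Real.sqrt (lam i) := by
    intro i
    rw [← hnormMv_sq i, Real.sqrt_sq (norm_nonneg _)]
  -- the left singular vectors
  set u : k → EuclideanSpace ℂ m := fun i => ((‖Mv i‖ : ℝ) : ℂ)⁻¹ • Mv i with hu
  have horthu : Orthonormal ℂ (fun i : {i : k // lam i ≠ 0} => u i.1) := by
    rw [orthonormal_iff_ite]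
    intro i j
    rw [hu]
    simp only []
    rw [inner_smul_left, inner_smul_right, hinnerMv, map_inv₀, Complex.conj_ofReal]
    by_cases hij : i = j
    · subst hij
      rw [if_pos rfl, inner_self_eq_norm_sq_to_K, hvorth.1 (i:k)]
      have hne0 : ‖Mv (i:k)‖ ≠ 0 := by
        intro hc
        apply i.2
        rw [← hnormMv_sq (i:k), hc]
        ring
      have hsq : ((‖Mv (i:k)‖:ℝ):ℂ) * ((‖Mv (i:k)‖:ℝ):ℂ) = ((lam (i:k) : ℝ):ℂ) := by
        rw [← Complex.ofReal_mul]
        norm_cast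
        rw [← pow_two]
        exact hnormMv_sq (i:k)
      have hne0c : ((‖Mv (i:k)‖:ℝ):ℂ) ≠ 0 := Complex.ofReal_ne_zero.mpr hne0
      norm_num
      field_simp
      push_cast
      linear_combination -hsq
    · have hne : (i : k) ≠ (j : k) := fun hc => hij (Subtype.ext hc)
      rw [hvorth.2 hne]
      simp [hij]
  have hMvne0 : ∀ i : {i : k // lam i ≠ 0}, ‖Mv (i:k)‖ ≠ 0 := by
    intro i hc
    apply i.2
    rw [← hnormMv_sq (i:k), hc]
    ring
  -- Bessel bounds
  have hnormstar : ∀ (r : ι), ‖toE (star (A r))‖^2 = ∑ c : m, ‖A r c‖^2 := by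
    intro r
    rw [EuclideanSpace.norm_eq, Real.sq_sqrt (by positivity)]
    apply Finset.sum_congr rfl
    intro c _
    simp
  have hnormstarB : ∀ (r : ι), ‖toE (star (B r))‖^2 = ∑ c : k, ‖B r c‖^2 := by
    intro r
    rw [EuclideanSpace.norm_eq, Real.sq_sqrt (by positivity)]
    apply Finset.sum_congr rfl
    intro c _
    simp
  have hsumA : ∑ i : {i : k // lam i ≠ 0}, ‖toE (A *ᵥ u (i:k))‖^2
      ≤ ∑ q : ι × m, ‖A q.1 q.2‖^2 := by
    have h1 : ∀ i : {i : k // lam i ≠ 0}, ‖toE (A *ᵥ u (i:k))‖^2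
        = ∑ r : ι, ‖(inner ℂ (u (i:k)) (toE (star (A r))) : ℂ)‖^2 := by
      intro i
      rw [norm_toE_mulVec_sq]
      apply Finset.sum_congr rfl
      intro r _
      rw [← norm_inner_symm]
    calc ∑ i : {i : k // lam i ≠ 0}, ‖toE (A *ᵥ u (i:k))‖^2
        = ∑ r : ι, ∑ i : {i : k // lam i ≠ 0}, ‖(inner ℂ (u (i:k)) (toE (star (A r))) : ℂ)‖^2 := by
          rw [Finset.sum_congr rfl (fun i _ => h1 i), Finset.sum_comm]
      _ ≤ ∑ r : ι, ‖toE (star (A r))‖^2 :=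
          Finset.sum_le_sum (fun r _ => horthu.sum_inner_products_le (toE (star (A r))))
      _ = ∑ q : ι × m, ‖A q.1 q.2‖^2 := by
          rw [Fintype.sum_prod_type]
          exact Finset.sum_congr rfl (fun r _ => hnormstar r)
  have hvorthS : Orthonormal ℂ (fun i : {i : k // lam i ≠ 0} => v (i:k)) :=
    hvorth.comp Subtype.val Subtype.coe_injective
  have hsumB : ∑ i : {i : k // lam i ≠ 0}, ‖toE (B *ᵥ v (i:k))‖^2
      ≤ ∑ q : ι × k, ‖B q.1 q.2‖^2 := by
    have h1 : ∀ i : {i : k // lam i ≠ 0}, ‖toE (B *ᵥ v (i:k))‖^2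
        = ∑ r : ι, ‖(inner ℂ (v (i:k)) (toE (star (B r))) : ℂ)‖^2 := by
      intro i
      rw [norm_toE_mulVec_sq]
      apply Finset.sum_congr rfl
      intro r _
      rw [← norm_inner_symm]
    calc ∑ i : {i : k // lam i ≠ 0}, ‖toE (B *ᵥ v (i:k))‖^2
        = ∑ r : ι, ∑ i : {i : k // lam i ≠ 0}, ‖(inner ℂ (v (i:k)) (toE (star (B r))) : ℂ)‖^2 := by
          rw [Finset.sum_congr rfl (fun i _ => h1 i), Finset.sum_comm]
      _ ≤ ∑ r : ι, ‖toE (star (B r))‖^2 :=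
          Finset.sum_le_sum (fun r _ => hvorthS.sum_inner_products_le (toE (star (B r))))
      _ = ∑ q : ι × k, ‖B q.1 q.2‖^2 := by
          rw [Fintype.sum_prod_type]
          exact Finset.sum_congr rfl (fun r _ => hnormstarB r)
  -- the key per-index inequality
  have key_i : ∀ i : {i : k // lam i ≠ 0},
      Real.sqrt (lam (i:k)) ≤ ‖toE (A *ᵥ u (i:k))‖ * ‖toE (B *ᵥ v (i:k))‖ := by
    intro i
    have h1 : (inner ℂ (u (i:k)) (Mv (i:k)) : ℂ) = ((‖Mv (i:k)‖:ℝ) : ℂ) := by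
      rw [hu]
      simp only []
      rw [inner_smul_left, map_inv₀, Complex.conj_ofReal, inner_self_eq_norm_sq_to_K]
      have hne0c : ((‖Mv (i:k)‖:ℝ):ℂ) ≠ 0 := Complex.ofReal_ne_zero.mpr (hMvne0 i)
      field_simp
      push_cast
      ring
      rfl
    have h2 : (inner ℂ (u (i:k)) (Mv (i:k)) : ℂ)
        = inner ℂ (toE (A *ᵥ u (i:k))) (toE (B *ᵥ v (i:k))) := by
      conv_lhs => rw [hMv]
      simp only []
      have hMv2 : (M *ᵥ (v (i:k) : k → ℂ)) = Aᴴ *ᵥ (B *ᵥ (v (i:k) : k → ℂ)) := by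
        rw [hM, ← Matrix.mulVec_mulVec]
      rw [hMv2, inner_toE_mulVec_right Aᴴ (B *ᵥ (v (i:k) : k → ℂ)) (u (i:k)),
        Matrix.conjTranspose_conjTranspose]
    have h3 : ‖(inner ℂ (u (i:k)) (Mv (i:k)) : ℂ)‖ = Real.sqrt (lam (i:k)) := by
      rw [h1, Complex.norm_real, Real.norm_of_nonneg (norm_nonneg _), hnormMv]
    rw [← h3, h2]
    exact norm_inner_le_norm _ _
  -- final chain
  calc traceNorm (Aᴴ * B) = ∑ i : k, Real.sqrt (lam i) := rfl
    _ = ∑ i ∈ Finset.univ.filter (fun i => lam i ≠ 0), Real.sqrt (lam i) := by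
        rw [Finset.sum_filter_of_ne]
        intro x _ hx
        intro hc
        apply hx
        rw [hc, Real.sqrt_zero]
    _ = ∑ i : {i : k // lam i ≠ 0}, Real.sqrt (lam (i:k)) := by
        rw [Finset.sum_subtype (p := fun i : k => lam i ≠ 0) _ (fun x => by simp)]
    _ ≤ ∑ i : {i : k // lam i ≠ 0}, ‖toE (A *ᵥ u (i:k))‖ * ‖toE (B *ᵥ v (i:k))‖ :=
        Finset.sum_le_sum (fun i _ => key_i i)
    _ ≤ Real.sqrt (∑ i : {i : k // lam i ≠ 0}, ‖toE (A *ᵥ u (i:k))‖^2) *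
        Real.sqrt (∑ i : {i : k // lam i ≠ 0}, ‖toE (B *ᵥ v (i:k))‖^2) :=
        Real.sum_mul_le_sqrt_mul_sqrt _ _ _
    _ ≤ Real.sqrt (∑ q : ι × m, ‖A q.1 q.2‖^2) * Real.sqrt (∑ q : ι × k, ‖B q.1 q.2‖^2) := by
        apply mul_le_mul (Real.sqrt_le_sqrt hsumA) (Real.sqrt_le_sqrt hsumB)
          (Real.sqrt_nonneg _) (Real.sqrt_nonneg _)


lemma hwc_mul_ct_trace (d : ℕ) (hd : 0 < d) (a i : HWIdx d) :
    (heisenbergWeyl d (a.1.1:ℕ) (a.1.2:ℕ) * (heisenbergWeyl d (i.1.1:ℕ) (i.1.2:ℕ))ᴴ).trace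
      = if a = i then (d:ℂ) else 0 := by
  rw [Matrix.trace_mul_comm, hw_orth d hd i.1.1 i.1.2 a.1.1 a.1.2]
  by_cases h : a = i
  · subst h
    rw [if_pos ⟨rfl, rfl⟩, if_pos rfl]
  · rw [if_neg (fun hc => h (Subtype.ext (Prod.ext hc.1.symm hc.2.symm))), if_neg h]


lemma hwc_trace_zero (d : ℕ) (hd : 0 < d) (i : HWIdx d) :
    (heisenbergWeyl d (i.1.1:ℕ) (i.1.2:ℕ)).trace = 0 := by
  have h0 : ((⟨0, hd⟩ : Fin d) : ℕ) = 0 := rfl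
  have h := hw_orth d hd ⟨0, hd⟩ ⟨0, hd⟩ i.1.1 i.1.2
  rw [h0, hw_zero_zero d, Matrix.conjTranspose_one, Matrix.one_mul] at h
  rw [h, if_neg]
  rintro ⟨h1, h2⟩
  rcases i.2 with h3 | h3
  · exact h3 (by rw [← h1])
  · exact h3 (by rw [← h2])


lemma hwc_ct_trace_zero (d : ℕ) (hd : 0 < d) (i : HWIdx d) :
    ((heisenbergWeyl d (i.1.1:ℕ) (i.1.2:ℕ))ᴴ).trace = 0 := by
  rw [Matrix.trace_conjTranspose, hwc_trace_zero d hd i, star_zero]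


lemma bessel_bound' (d : ℕ) (hd : 0 < d) (ρ : Matrix (Fin d) (Fin d) ℂ)
    (hρ : ρ.PosSemidef) (htr : ρ.trace = 1) :
    ∑ i : HWIdx d, ‖(ρ * (heisenbergWeyl d (i.1.1:ℕ) (i.1.2:ℕ))ᴴ).trace‖^2 ≤ (d:ℝ) - 1 :=
  bessel_bound d hd ρ hρ htr


end Aux

/-- **Heisenberg–Weyl criterion** (`κ_A = d_A`, `κ_B = d_B`): for a separable state,
`‖M̂_{x,y}^{(n)}‖_tr ≤ √((n x² + d_A − 1)(n y² + d_B − 1))`, where the Bloch decomposition is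
taken with respect to the non-identity Heisenberg–Weyl operators. -/
theorem traceNorm_normExtCorrTensor_le_of_separable_heisenbergWeyl
    (dA dB : ℕ) (hdA : 2 ≤ dA) (hdB : 2 ≤ dB)
    (ρ : Matrix (Fin dA × Fin dB) (Fin dA × Fin dB) ℂ)
    (hρ : IsDensityMatrix ρ)
    (hsep : IsSeparableState dA dB ρ)
    (r : HWIdx dA → ℂ) (s : HWIdx dB → ℂ)
    (T : Matrix (HWIdx dA) (HWIdx dB) ℂ)
    (hexp : ρ = ((dA * dB : ℂ))⁻¹ •
      ((1 : Matrix (Fin dA × Fin dB) (Fin dA × Fin dB) ℂ)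
        + ∑ i : HWIdx dA, r i •
            (heisenbergWeyl dA i.1.1 i.1.2 ⊗ₖ (1 : Matrix (Fin dB) (Fin dB) ℂ))
        + ∑ j : HWIdx dB, s j •
            ((1 : Matrix (Fin dA) (Fin dA) ℂ) ⊗ₖ heisenbergWeyl dB j.1.1 j.1.2)
        + ∑ i : HWIdx dA, ∑ j : HWIdx dB, T i j •
            (heisenbergWeyl dA i.1.1 i.1.2 ⊗ₖ heisenbergWeyl dB j.1.1 j.1.2)))
    (x y : ℝ) (hx : 0 ≤ x) (hy : 0 ≤ y) (n : ℕ) (hn : 0 < n) :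
    traceNorm (Matrix.fromBlocks
      (Matrix.of fun (_ : Fin n) (_ : Fin n) => ((x * y : ℝ) : ℂ))
      (Matrix.of fun (_ : Fin n) (j : HWIdx dB) => ((x : ℝ) : ℂ) * s j)
      (Matrix.of fun (i : HWIdx dA) (_ : Fin n) => ((y : ℝ) : ℂ) * r i)
      T) ≤
      Real.sqrt ((n * x ^ 2 + (dA : ℝ) - 1) * (n * y ^ 2 + (dB : ℝ) - 1)) := by
  classical
  obtain ⟨N, p, ρA, ρB, hp0, hp1, hρA, hρB, hsepeq⟩ := hsep
  have hdA0 : 0 < dA := by omega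
  have hdB0 : 0 < dB := by omega
  have hdAc : (dA : ℂ) ≠ 0 := Nat.cast_ne_zero.mpr hdA0.ne'
  have hdBc : (dB : ℂ) ≠ 0 := Nat.cast_ne_zero.mpr hdB0.ne'
  -- trace of ρ against Kronecker products, from the separable decomposition
  have htr_sep : ∀ (X : Matrix (Fin dA) (Fin dA) ℂ) (Y : Matrix (Fin dB) (Fin dB) ℂ),
      (ρ * (X ⊗ₖ Y)).trace
        = ∑ t, (p t : ℂ) * ((ρA t * X).trace * (ρB t * Y).trace) := by
    intro X Y
    rw [hsepeq, Matrix.sum_mul, Matrix.trace_sum]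
    apply Finset.sum_congr rfl
    intro t _
    rw [smul_mul_assoc, Matrix.trace_smul, ← Matrix.mul_kronecker_mul,
      Matrix.trace_kronecker, smul_eq_mul]
  -- trace of ρ against anything, from the Bloch expansion
  have hexp_tr : ∀ (Z : Matrix (Fin dA × Fin dB) (Fin dA × Fin dB) ℂ),
      (ρ * Z).trace = ((dA * dB : ℂ))⁻¹ *
        (Z.trace
         + (∑ i : HWIdx dA, r i *
             ((heisenbergWeyl dA i.1.1 i.1.2 ⊗ₖ (1 : Matrix (Fin dB) (Fin dB) ℂ)) * Z).trace)
         + (∑ j : HWIdx dB, s j *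
             (((1 : Matrix (Fin dA) (Fin dA) ℂ) ⊗ₖ heisenbergWeyl dB j.1.1 j.1.2) * Z).trace)
         + (∑ i : HWIdx dA, ∑ j : HWIdx dB, T i j *
             ((heisenbergWeyl dA i.1.1 i.1.2 ⊗ₖ heisenbergWeyl dB j.1.1 j.1.2) * Z).trace)) := by
    intro Z
    conv_lhs => rw [hexp]
    rw [smul_mul_assoc, Matrix.trace_smul, smul_eq_mul]
    congr 1
    simp only [Matrix.add_mul, Matrix.sum_mul, Matrix.one_mul, smul_mul_assoc,
      Matrix.trace_add, Matrix.trace_sum, Matrix.trace_smul, smul_eq_mul]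
  -- extraction of T
  have hTeq : ∀ (i : HWIdx dA) (j : HWIdx dB),
      T i j = ∑ t, (p t : ℂ) *
        (((ρA t * (heisenbergWeyl dA (i.1.1:ℕ) (i.1.2:ℕ))ᴴ).trace) *
         ((ρB t * (heisenbergWeyl dB (j.1.1:ℕ) (j.1.2:ℕ))ᴴ).trace)) := by
    intro i j
    have e2 := hexp_tr ((heisenbergWeyl dA (i.1.1:ℕ) (i.1.2:ℕ))ᴴ ⊗ₖ
      (heisenbergWeyl dB (j.1.1:ℕ) (j.1.2:ℕ))ᴴ)
    have c0 : ((heisenbergWeyl dA (i.1.1:ℕ) (i.1.2:ℕ))ᴴ ⊗ₖ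
        (heisenbergWeyl dB (j.1.1:ℕ) (j.1.2:ℕ))ᴴ).trace = 0 := by
      rw [Matrix.trace_kronecker, hwc_ct_trace_zero dA hdA0 i, zero_mul]
    have c1 : (∑ a : HWIdx dA, r a *
        ((heisenbergWeyl dA (a.1.1:ℕ) (a.1.2:ℕ) ⊗ₖ (1 : Matrix (Fin dB) (Fin dB) ℂ)) *
          ((heisenbergWeyl dA (i.1.1:ℕ) (i.1.2:ℕ))ᴴ ⊗ₖ
           (heisenbergWeyl dB (j.1.1:ℕ) (j.1.2:ℕ))ᴴ)).trace) = 0 := by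
      apply Finset.sum_eq_zero
      intro a _
      rw [← Matrix.mul_kronecker_mul, Matrix.trace_kronecker, Matrix.one_mul,
        hwc_ct_trace_zero dB hdB0 j, mul_zero, mul_zero]
    have c2 : (∑ b : HWIdx dB, s b *
        (((1 : Matrix (Fin dA) (Fin dA) ℂ) ⊗ₖ heisenbergWeyl dB (b.1.1:ℕ) (b.1.2:ℕ)) *
          ((heisenbergWeyl dA (i.1.1:ℕ) (i.1.2:ℕ))ᴴ ⊗ₖ
           (heisenbergWeyl dB (j.1.1:ℕ) (j.1.2:ℕ))ᴴ)).trace) = 0 := by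
      apply Finset.sum_eq_zero
      intro b _
      rw [← Matrix.mul_kronecker_mul, Matrix.trace_kronecker, Matrix.one_mul,
        hwc_ct_trace_zero dA hdA0 i, zero_mul, mul_zero]
    have step : ∀ (a : HWIdx dA) (b : HWIdx dB),
        ((heisenbergWeyl dA (a.1.1:ℕ) (a.1.2:ℕ) ⊗ₖ heisenbergWeyl dB (b.1.1:ℕ) (b.1.2:ℕ)) *
          ((heisenbergWeyl dA (i.1.1:ℕ) (i.1.2:ℕ))ᴴ ⊗ₖ
           (heisenbergWeyl dB (j.1.1:ℕ) (j.1.2:ℕ))ᴴ)).trace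
        = (if a = i then (dA:ℂ) else 0) * (if b = j then (dB:ℂ) else 0) := by
      intro a b
      rw [← Matrix.mul_kronecker_mul, Matrix.trace_kronecker,
        hwc_mul_ct_trace dA hdA0 a i, hwc_mul_ct_trace dB hdB0 b j]
    have c3 : (∑ a : HWIdx dA, ∑ b : HWIdx dB, T a b *
        ((heisenbergWeyl dA (a.1.1:ℕ) (a.1.2:ℕ) ⊗ₖ heisenbergWeyl dB (b.1.1:ℕ) (b.1.2:ℕ)) *
          ((heisenbergWeyl dA (i.1.1:ℕ) (i.1.2:ℕ))ᴴ ⊗ₖ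
           (heisenbergWeyl dB (j.1.1:ℕ) (j.1.2:ℕ))ᴴ)).trace)
        = T i j * ((dA:ℂ) * dB) := by
      have c3a : ∀ a : HWIdx dA, (∑ b : HWIdx dB, T a b *
          ((heisenbergWeyl dA (a.1.1:ℕ) (a.1.2:ℕ) ⊗ₖ heisenbergWeyl dB (b.1.1:ℕ) (b.1.2:ℕ)) *
            ((heisenbergWeyl dA (i.1.1:ℕ) (i.1.2:ℕ))ᴴ ⊗ₖ
             (heisenbergWeyl dB (j.1.1:ℕ) (j.1.2:ℕ))ᴴ)).trace)
          = if a = i then T a j * ((dA:ℂ) * dB) else 0 := by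
        intro a
        by_cases ha : a = i
        · rw [if_pos ha]
          rw [Finset.sum_eq_single_of_mem j (Finset.mem_univ j)
            (fun b _ hb => by rw [step a b, if_neg hb, mul_zero, mul_zero])]
          rw [step a j, if_pos ha, if_pos rfl]
        · rw [if_neg ha]
          exact Finset.sum_eq_zero
            (fun b _ => by rw [step a b, if_neg ha, zero_mul, mul_zero])
      rw [Finset.sum_congr rfl (fun a _ => c3a a), Finset.sum_ite_eq' Finset.univ i
        (fun a => T a j * ((dA:ℂ) * dB)), if_pos (Finset.mem_univ i)]
    rw [c0, c1, c2, c3, htr_sep] at e2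
    rw [e2]
    field_simp
    ring
  -- extraction of r
  have hre : ∀ (i : HWIdx dA),
      r i = ∑ t, (p t : ℂ) * ((ρA t * (heisenbergWeyl dA (i.1.1:ℕ) (i.1.2:ℕ))ᴴ).trace) := by
    intro i
    have e2 := hexp_tr ((heisenbergWeyl dA (i.1.1:ℕ) (i.1.2:ℕ))ᴴ ⊗ₖ
      (1 : Matrix (Fin dB) (Fin dB) ℂ))
    have c0 : ((heisenbergWeyl dA (i.1.1:ℕ) (i.1.2:ℕ))ᴴ ⊗ₖ
        (1 : Matrix (Fin dB) (Fin dB) ℂ)).trace = 0 := by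
      rw [Matrix.trace_kronecker, hwc_ct_trace_zero dA hdA0 i, zero_mul]
    have c1 : (∑ a : HWIdx dA, r a *
        ((heisenbergWeyl dA (a.1.1:ℕ) (a.1.2:ℕ) ⊗ₖ (1 : Matrix (Fin dB) (Fin dB) ℂ)) *
          ((heisenbergWeyl dA (i.1.1:ℕ) (i.1.2:ℕ))ᴴ ⊗ₖ
           (1 : Matrix (Fin dB) (Fin dB) ℂ))).trace) = r i * ((dA:ℂ) * dB) := by
      have step1 : ∀ a : HWIdx dA,
          ((heisenbergWeyl dA (a.1.1:ℕ) (a.1.2:ℕ) ⊗ₖ (1 : Matrix (Fin dB) (Fin dB) ℂ)) *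
            ((heisenbergWeyl dA (i.1.1:ℕ) (i.1.2:ℕ))ᴴ ⊗ₖ
             (1 : Matrix (Fin dB) (Fin dB) ℂ))).trace
          = (if a = i then (dA:ℂ) else 0) * (dB:ℂ) := by
        intro a
        rw [← Matrix.mul_kronecker_mul, Matrix.trace_kronecker,
          hwc_mul_ct_trace dA hdA0 a i, Matrix.one_mul, Matrix.trace_one, Fintype.card_fin]
      have c1a : ∀ a : HWIdx dA, r a *
          ((heisenbergWeyl dA (a.1.1:ℕ) (a.1.2:ℕ) ⊗ₖ (1 : Matrix (Fin dB) (Fin dB) ℂ)) *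
            ((heisenbergWeyl dA (i.1.1:ℕ) (i.1.2:ℕ))ᴴ ⊗ₖ
             (1 : Matrix (Fin dB) (Fin dB) ℂ))).trace
          = if a = i then r a * ((dA:ℂ) * dB) else 0 := by
        intro a
        rw [step1 a]
        by_cases ha : a = i
        · rw [if_pos ha, if_pos ha]
        · rw [if_neg ha, if_neg ha, zero_mul, mul_zero]
      rw [Finset.sum_congr rfl (fun a _ => c1a a), Finset.sum_ite_eq' Finset.univ i
        (fun a => r a * ((dA:ℂ) * dB)), if_pos (Finset.mem_univ i)]
    have c2 : (∑ b : HWIdx dB, s b *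
        (((1 : Matrix (Fin dA) (Fin dA) ℂ) ⊗ₖ heisenbergWeyl dB (b.1.1:ℕ) (b.1.2:ℕ)) *
          ((heisenbergWeyl dA (i.1.1:ℕ) (i.1.2:ℕ))ᴴ ⊗ₖ
           (1 : Matrix (Fin dB) (Fin dB) ℂ))).trace) = 0 := by
      apply Finset.sum_eq_zero
      intro b _
      rw [← Matrix.mul_kronecker_mul, Matrix.trace_kronecker, Matrix.one_mul,
        hwc_ct_trace_zero dA hdA0 i, zero_mul, mul_zero]
    have c3 : (∑ a : HWIdx dA, ∑ b : HWIdx dB, T a b *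
        ((heisenbergWeyl dA (a.1.1:ℕ) (a.1.2:ℕ) ⊗ₖ heisenbergWeyl dB (b.1.1:ℕ) (b.1.2:ℕ)) *
          ((heisenbergWeyl dA (i.1.1:ℕ) (i.1.2:ℕ))ᴴ ⊗ₖ
           (1 : Matrix (Fin dB) (Fin dB) ℂ))).trace) = 0 := by
      apply Finset.sum_eq_zero
      intro a _
      apply Finset.sum_eq_zero
      intro b _
      rw [← Matrix.mul_kronecker_mul, Matrix.trace_kronecker, Matrix.mul_one,
        hwc_trace_zero dB hdB0 b, mul_zero, mul_zero]
    have e1 : (ρ * ((heisenbergWeyl dA (i.1.1:ℕ) (i.1.2:ℕ))ᴴ ⊗ₖ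
        (1 : Matrix (Fin dB) (Fin dB) ℂ))).trace
        = ∑ t, (p t : ℂ) * ((ρA t * (heisenbergWeyl dA (i.1.1:ℕ) (i.1.2:ℕ))ᴴ).trace) := by
      rw [htr_sep]
      apply Finset.sum_congr rfl
      intro t _
      rw [Matrix.mul_one, (hρB t).2, mul_one]
    rw [c0, c1, c2, c3, e1] at e2
    rw [e2]
    field_simp
    ring
  -- extraction of s
  have hse : ∀ (j : HWIdx dB),
      s j = ∑ t, (p t : ℂ) * ((ρB t * (heisenbergWeyl dB (j.1.1:ℕ) (j.1.2:ℕ))ᴴ).trace) := by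
    intro j
    have e2 := hexp_tr ((1 : Matrix (Fin dA) (Fin dA) ℂ) ⊗ₖ
      (heisenbergWeyl dB (j.1.1:ℕ) (j.1.2:ℕ))ᴴ)
    have c0 : ((1 : Matrix (Fin dA) (Fin dA) ℂ) ⊗ₖ
        (heisenbergWeyl dB (j.1.1:ℕ) (j.1.2:ℕ))ᴴ).trace = 0 := by
      rw [Matrix.trace_kronecker, hwc_ct_trace_zero dB hdB0 j, mul_zero]
    have c1 : (∑ a : HWIdx dA, r a *
        ((heisenbergWeyl dA (a.1.1:ℕ) (a.1.2:ℕ) ⊗ₖ (1 : Matrix (Fin dB) (Fin dB) ℂ)) *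
          ((1 : Matrix (Fin dA) (Fin dA) ℂ) ⊗ₖ
           (heisenbergWeyl dB (j.1.1:ℕ) (j.1.2:ℕ))ᴴ)).trace) = 0 := by
      apply Finset.sum_eq_zero
      intro a _
      rw [← Matrix.mul_kronecker_mul, Matrix.trace_kronecker, Matrix.mul_one,
        hwc_trace_zero dA hdA0 a, zero_mul, mul_zero]
    have c2 : (∑ b : HWIdx dB, s b *
        (((1 : Matrix (Fin dA) (Fin dA) ℂ) ⊗ₖ heisenbergWeyl dB (b.1.1:ℕ) (b.1.2:ℕ)) *
          ((1 : Matrix (Fin dA) (Fin dA) ℂ) ⊗ₖ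
           (heisenbergWeyl dB (j.1.1:ℕ) (j.1.2:ℕ))ᴴ)).trace) = s j * ((dA:ℂ) * dB) := by
      have step1 : ∀ b : HWIdx dB,
          (((1 : Matrix (Fin dA) (Fin dA) ℂ) ⊗ₖ heisenbergWeyl dB (b.1.1:ℕ) (b.1.2:ℕ)) *
            ((1 : Matrix (Fin dA) (Fin dA) ℂ) ⊗ₖ
             (heisenbergWeyl dB (j.1.1:ℕ) (j.1.2:ℕ))ᴴ)).trace
          = (dA:ℂ) * (if b = j then (dB:ℂ) else 0) := by
        intro b
        rw [← Matrix.mul_kronecker_mul, Matrix.trace_kronecker,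
          hwc_mul_ct_trace dB hdB0 b j, Matrix.one_mul, Matrix.trace_one, Fintype.card_fin]
      have c2a : ∀ b : HWIdx dB, s b *
          (((1 : Matrix (Fin dA) (Fin dA) ℂ) ⊗ₖ heisenbergWeyl dB (b.1.1:ℕ) (b.1.2:ℕ)) *
            ((1 : Matrix (Fin dA) (Fin dA) ℂ) ⊗ₖ
             (heisenbergWeyl dB (j.1.1:ℕ) (j.1.2:ℕ))ᴴ)).trace
          = if b = j then s b * ((dA:ℂ) * dB) else 0 := by
        intro b
        rw [step1 b]
        by_cases hb : b = j
        · rw [if_pos hb, if_pos hb]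
        · rw [if_neg hb, if_neg hb, mul_zero, mul_zero]
      rw [Finset.sum_congr rfl (fun b _ => c2a b), Finset.sum_ite_eq' Finset.univ j
        (fun b => s b * ((dA:ℂ) * dB)), if_pos (Finset.mem_univ j)]
    have c3 : (∑ a : HWIdx dA, ∑ b : HWIdx dB, T a b *
        ((heisenbergWeyl dA (a.1.1:ℕ) (a.1.2:ℕ) ⊗ₖ heisenbergWeyl dB (b.1.1:ℕ) (b.1.2:ℕ)) *
          ((1 : Matrix (Fin dA) (Fin dA) ℂ) ⊗ₖ
           (heisenbergWeyl dB (j.1.1:ℕ) (j.1.2:ℕ))ᴴ)).trace) = 0 := by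
      apply Finset.sum_eq_zero
      intro a _
      apply Finset.sum_eq_zero
      intro b _
      rw [← Matrix.mul_kronecker_mul, Matrix.trace_kronecker, Matrix.mul_one,
        hwc_trace_zero dA hdA0 a, zero_mul, mul_zero]
    have e1 : (ρ * ((1 : Matrix (Fin dA) (Fin dA) ℂ) ⊗ₖ
        (heisenbergWeyl dB (j.1.1:ℕ) (j.1.2:ℕ))ᴴ)).trace
        = ∑ t, (p t : ℂ) * ((ρB t * (heisenbergWeyl dB (j.1.1:ℕ) (j.1.2:ℕ))ᴴ).trace) := by
      rw [htr_sep]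
      apply Finset.sum_congr rfl
      intro t _
      rw [Matrix.mul_one, (hρA t).2, one_mul]
    rw [c0, c1, c2, c3, e1] at e2
    rw [e2]
    field_simp
    ring
  -- the factorization matrices
  set Amat : Matrix (Fin N) (Fin n ⊕ HWIdx dA) ℂ := Matrix.of fun t c =>
    ((Real.sqrt (p t) : ℝ) : ℂ) * Sum.elim (fun _ : Fin n => ((x:ℝ):ℂ))
      (fun i => (starRingEnd ℂ)
        ((ρA t * (heisenbergWeyl dA (i.1.1:ℕ) (i.1.2:ℕ))ᴴ).trace)) c
    with hAmat
  set Bmat : Matrix (Fin N) (Fin n ⊕ HWIdx dB) ℂ := Matrix.of fun t c =>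
    ((Real.sqrt (p t) : ℝ) : ℂ) * Sum.elim (fun _ : Fin n => ((y:ℝ):ℂ))
      (fun j => (ρB t * (heisenbergWeyl dB (j.1.1:ℕ) (j.1.2:ℕ))ᴴ).trace) c
    with hBmat
  have hpc : ∀ t, ((Real.sqrt (p t) : ℝ) : ℂ) * ((Real.sqrt (p t) : ℝ) : ℂ) = ((p t : ℝ) : ℂ) := by
    intro t
    rw [← Complex.ofReal_mul, Real.mul_self_sqrt (hp0 t)]
  have hp1c : (∑ t, ((p t : ℝ) : ℂ)) = 1 := by
    push_cast
    exact_mod_cast congrArg (fun z : ℝ => (z : ℂ)) hp1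
  have hfact : (Matrix.fromBlocks
      (Matrix.of fun (_ : Fin n) (_ : Fin n) => ((x * y : ℝ) : ℂ))
      (Matrix.of fun (_ : Fin n) (j : HWIdx dB) => ((x : ℝ) : ℂ) * s j)
      (Matrix.of fun (i : HWIdx dA) (_ : Fin n) => ((y : ℝ) : ℂ) * r i)
      T) = Amatᴴ * Bmat := by
    ext c c'
    rw [Matrix.mul_apply]
    simp only [hAmat, hBmat, Matrix.conjTranspose_apply, Matrix.of_apply]
    cases c with
    | inl a =>
      cases c' with
      | inl b =>
        simp only [Sum.elim_inl, Matrix.fromBlocks_apply₁₁, Matrix.of_apply]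
        have hterm : ∀ t : Fin N,
            star (((Real.sqrt (p t) : ℝ) : ℂ) * ((x:ℝ):ℂ)) *
              (((Real.sqrt (p t) : ℝ) : ℂ) * ((y:ℝ):ℂ))
            = ((p t : ℝ) : ℂ) * (((x:ℝ):ℂ) * ((y:ℝ):ℂ)) := by
          intro t
          simp only [Complex.star_def, _root_.map_mul, Complex.conj_ofReal]
          rw [← hpc t]
          ring
        rw [Finset.sum_congr rfl (fun t _ => hterm t), ← Finset.sum_mul, hp1c, one_mul]
        push_cast
        ring
      | inr j =>
        simp only [Sum.elim_inl, Sum.elim_inr, Matrix.fromBlocks_apply₁₂, Matrix.of_apply]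
        have hterm : ∀ t : Fin N,
            star (((Real.sqrt (p t) : ℝ) : ℂ) * ((x:ℝ):ℂ)) *
              (((Real.sqrt (p t) : ℝ) : ℂ) *
                ((ρB t * (heisenbergWeyl dB (j.1.1:ℕ) (j.1.2:ℕ))ᴴ).trace))
            = ((x:ℝ):ℂ) * (((p t : ℝ) : ℂ) *
                ((ρB t * (heisenbergWeyl dB (j.1.1:ℕ) (j.1.2:ℕ))ᴴ).trace)) := by
          intro t
          simp only [Complex.star_def, _root_.map_mul, Complex.conj_ofReal]
          rw [← hpc t]
          ring
        rw [Finset.sum_congr rfl (fun t _ => hterm t), ← Finset.mul_sum, ← hse j]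
    | inr i =>
      cases c' with
      | inl b =>
        simp only [Sum.elim_inl, Sum.elim_inr, Matrix.fromBlocks_apply₂₁, Matrix.of_apply]
        have hterm : ∀ t : Fin N,
            star (((Real.sqrt (p t) : ℝ) : ℂ) * (starRingEnd ℂ)
                ((ρA t * (heisenbergWeyl dA (i.1.1:ℕ) (i.1.2:ℕ))ᴴ).trace)) *
              (((Real.sqrt (p t) : ℝ) : ℂ) * ((y:ℝ):ℂ))
            = ((y:ℝ):ℂ) * (((p t : ℝ) : ℂ) *
                ((ρA t * (heisenbergWeyl dA (i.1.1:ℕ) (i.1.2:ℕ))ᴴ).trace)) := by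
          intro t
          simp only [Complex.star_def, _root_.map_mul, Complex.conj_ofReal, Complex.conj_conj]
          rw [← hpc t]
          ring
        rw [Finset.sum_congr rfl (fun t _ => hterm t), ← Finset.mul_sum, ← hre i]
      | inr j =>
        simp only [Sum.elim_inr, Matrix.fromBlocks_apply₂₂, Matrix.of_apply]
        have hterm : ∀ t : Fin N,
            star (((Real.sqrt (p t) : ℝ) : ℂ) * (starRingEnd ℂ)
                ((ρA t * (heisenbergWeyl dA (i.1.1:ℕ) (i.1.2:ℕ))ᴴ).trace)) *
              (((Real.sqrt (p t) : ℝ) : ℂ) *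
                ((ρB t * (heisenbergWeyl dB (j.1.1:ℕ) (j.1.2:ℕ))ᴴ).trace))
            = ((p t : ℝ) : ℂ) *
                (((ρA t * (heisenbergWeyl dA (i.1.1:ℕ) (i.1.2:ℕ))ᴴ).trace) *
                 ((ρB t * (heisenbergWeyl dB (j.1.1:ℕ) (j.1.2:ℕ))ᴴ).trace)) := by
          intro t
          simp only [Complex.star_def, _root_.map_mul, Complex.conj_ofReal, Complex.conj_conj]
          rw [← hpc t]
          ring
        rw [Finset.sum_congr rfl (fun t _ => hterm t), ← hTeq i j]
  -- entrywise bounds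
  have hbA : ∑ q : Fin N × (Fin n ⊕ HWIdx dA), ‖Amat q.1 q.2‖^2
      ≤ (n:ℝ) * x^2 + (dA:ℝ) - 1 := by
    rw [Fintype.sum_prod_type]
    have per : ∀ t : Fin N, ∑ c : Fin n ⊕ HWIdx dA, ‖Amat t c‖^2
        = p t * (((n:ℝ) * x^2) + ∑ i : HWIdx dA,
            ‖((ρA t * (heisenbergWeyl dA (i.1.1:ℕ) (i.1.2:ℕ))ᴴ).trace)‖^2) := by
      intro t
      rw [Fintype.sum_sum_type]
      have h1 : ∀ a : Fin n, ‖Amat t (Sum.inl a)‖^2 = p t * x^2 := by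
        intro a
        simp only [hAmat, Matrix.of_apply, Sum.elim_inl]
        rw [norm_mul, mul_pow, Complex.norm_real, Complex.norm_real, Real.norm_eq_abs,
          Real.norm_eq_abs, abs_of_nonneg (Real.sqrt_nonneg _), abs_of_nonneg hx,
          Real.sq_sqrt (hp0 t)]
      have h2 : ∀ i : HWIdx dA, ‖Amat t (Sum.inr i)‖^2
          = p t * ‖((ρA t * (heisenbergWeyl dA (i.1.1:ℕ) (i.1.2:ℕ))ᴴ).trace)‖^2 := by
        intro i
        simp only [hAmat, Matrix.of_apply, Sum.elim_inr]
        rw [norm_mul, mul_pow, Complex.norm_real, Real.norm_eq_abs,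
          abs_of_nonneg (Real.sqrt_nonneg _), Real.sq_sqrt (hp0 t), RCLike.norm_conj]
      rw [Finset.sum_congr rfl (fun a _ => h1 a), Finset.sum_congr rfl (fun i _ => h2 i),
        Finset.sum_const, Finset.card_univ, Fintype.card_fin, ← Finset.mul_sum]
      push_cast
      ring
    rw [Finset.sum_congr rfl (fun t _ => per t)]
    have hb : ∀ t : Fin N, p t * (((n:ℝ) * x^2) + ∑ i : HWIdx dA,
        ‖((ρA t * (heisenbergWeyl dA (i.1.1:ℕ) (i.1.2:ℕ))ᴴ).trace)‖^2)
        ≤ p t * (((n:ℝ) * x^2) + ((dA:ℝ) - 1)) := by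
      intro t
      apply mul_le_mul_of_nonneg_left _ (hp0 t)
      apply add_le_add le_rfl
      exact bessel_bound' dA hdA0 (ρA t) (hρA t).1 (hρA t).2
    calc ∑ t, p t * (((n:ℝ) * x^2) + ∑ i : HWIdx dA,
          ‖((ρA t * (heisenbergWeyl dA (i.1.1:ℕ) (i.1.2:ℕ))ᴴ).trace)‖^2)
        ≤ ∑ t, p t * (((n:ℝ) * x^2) + ((dA:ℝ) - 1)) := Finset.sum_le_sum (fun t _ => hb t)
      _ = (∑ t, p t) * (((n:ℝ) * x^2) + ((dA:ℝ) - 1)) := by rw [Finset.sum_mul]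
      _ = (n:ℝ) * x^2 + (dA:ℝ) - 1 := by rw [hp1, one_mul]; ring
  have hbB : ∑ q : Fin N × (Fin n ⊕ HWIdx dB), ‖Bmat q.1 q.2‖^2
      ≤ (n:ℝ) * y^2 + (dB:ℝ) - 1 := by
    rw [Fintype.sum_prod_type]
    have per : ∀ t : Fin N, ∑ c : Fin n ⊕ HWIdx dB, ‖Bmat t c‖^2
        = p t * (((n:ℝ) * y^2) + ∑ j : HWIdx dB,
            ‖((ρB t * (heisenbergWeyl dB (j.1.1:ℕ) (j.1.2:ℕ))ᴴ).trace)‖^2) := by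
      intro t
      rw [Fintype.sum_sum_type]
      have h1 : ∀ a : Fin n, ‖Bmat t (Sum.inl a)‖^2 = p t * y^2 := by
        intro a
        simp only [hBmat, Matrix.of_apply, Sum.elim_inl]
        rw [norm_mul, mul_pow, Complex.norm_real, Complex.norm_real, Real.norm_eq_abs,
          Real.norm_eq_abs, abs_of_nonneg (Real.sqrt_nonneg _), abs_of_nonneg hy,
          Real.sq_sqrt (hp0 t)]
      have h2 : ∀ j : HWIdx dB, ‖Bmat t (Sum.inr j)‖^2
          = p t * ‖((ρB t * (heisenbergWeyl dB (j.1.1:ℕ) (j.1.2:ℕ))ᴴ).trace)‖^2 := by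
        intro j
        simp only [hBmat, Matrix.of_apply, Sum.elim_inr]
        rw [norm_mul, mul_pow, Complex.norm_real, Real.norm_eq_abs,
          abs_of_nonneg (Real.sqrt_nonneg _), Real.sq_sqrt (hp0 t)]
      rw [Finset.sum_congr rfl (fun a _ => h1 a), Finset.sum_congr rfl (fun j _ => h2 j),
        Finset.sum_const, Finset.card_univ, Fintype.card_fin, ← Finset.mul_sum]
      push_cast
      ring
    rw [Finset.sum_congr rfl (fun t _ => per t)]
    have hb : ∀ t : Fin N, p t * (((n:ℝ) * y^2) + ∑ j : HWIdx dB,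
        ‖((ρB t * (heisenbergWeyl dB (j.1.1:ℕ) (j.1.2:ℕ))ᴴ).trace)‖^2)
        ≤ p t * (((n:ℝ) * y^2) + ((dB:ℝ) - 1)) := by
      intro t
      apply mul_le_mul_of_nonneg_left _ (hp0 t)
      apply add_le_add le_rfl
      exact bessel_bound' dB hdB0 (ρB t) (hρB t).1 (hρB t).2
    calc ∑ t, p t * (((n:ℝ) * y^2) + ∑ j : HWIdx dB,
          ‖((ρB t * (heisenbergWeyl dB (j.1.1:ℕ) (j.1.2:ℕ))ᴴ).trace)‖^2)
        ≤ ∑ t, p t * (((n:ℝ) * y^2) + ((dB:ℝ) - 1)) := Finset.sum_le_sum (fun t _ => hb t)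
      _ = (∑ t, p t) * (((n:ℝ) * y^2) + ((dB:ℝ) - 1)) := by rw [Finset.sum_mul]
      _ = (n:ℝ) * y^2 + (dB:ℝ) - 1 := by rw [hp1, one_mul]; ring
  have h0A : (0:ℝ) ≤ (n:ℝ) * x^2 + (dA:ℝ) - 1 := by
    have h1 : (0:ℝ) ≤ (n:ℝ) * x^2 := by positivity
    have h2 : (2:ℝ) ≤ (dA:ℝ) := by exact_mod_cast hdA
    linarith
  have h0B : (0:ℝ) ≤ (n:ℝ) * y^2 + (dB:ℝ) - 1 := by
    have h1 : (0:ℝ) ≤ (n:ℝ) * y^2 := by positivity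
    have h2 : (2:ℝ) ≤ (dB:ℝ) := by exact_mod_cast hdB
    linarith
  rw [hfact]
  calc traceNorm (Amatᴴ * Bmat)
      ≤ Real.sqrt (∑ q : Fin N × (Fin n ⊕ HWIdx dA), ‖Amat q.1 q.2‖^2) *
        Real.sqrt (∑ q : Fin N × (Fin n ⊕ HWIdx dB), ‖Bmat q.1 q.2‖^2) :=
        traceNorm_conjTranspose_mul_le Amat Bmat
    _ ≤ Real.sqrt ((n:ℝ) * x^2 + (dA:ℝ) - 1) * Real.sqrt ((n:ℝ) * y^2 + (dB:ℝ) - 1) :=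
        mul_le_mul (Real.sqrt_le_sqrt hbA) (Real.sqrt_le_sqrt hbB)
          (Real.sqrt_nonneg _) (Real.sqrt_nonneg _)
    _ = Real.sqrt (((n:ℝ) * x^2 + (dA:ℝ) - 1) * ((n:ℝ) * y^2 + (dB:ℝ) - 1)) :=
        (Real.sqrt_mul h0A _).symm
end

section
/- Let ρ be a separable bipartite density matrix on ℂ^{d_A}⊗ℂ^{d_B}, let x, y ≥ 0 be real numbers and n a positive integer, and let O be any complex (d_A²+n−1)×(d_B²+n−1) matrix whose operator norm (largest singular value) is at most 1. Then Re Tr(O† M_{x,y}^{(n)}) ≤ √( ((n x² + d_A − 1)/(κ_A d_A)) · ((n y² + d_B − 1)/(κ_B d_B)) ); in particular, the linear functional ρ ↦ √( ((n x² + d_A − 1)/(κ_A d_A))((n y² + d_B − 1)/(κ_B d_B)) )·Tr(ρ) − Re Tr(O† M_{x,y}^{(n)}) is nonnegative on all separable states (an entanglement witness). -/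
open Matrix BigOperators Kronecker
open scoped ComplexOrder

/-- The extended correlation tensor `M_{x,y}^{(n)}` built from the Bloch data `r, s, T`. -/
noncomputable def extCorrTensor (dA dB n : ℕ) (κA κB x y : ℝ)
    (r : Fin (dA ^ 2 - 1) → ℂ) (s : Fin (dB ^ 2 - 1) → ℂ)
    (T : Matrix (Fin (dA ^ 2 - 1)) (Fin (dB ^ 2 - 1)) ℂ) :
    Matrix (Fin n ⊕ Fin (dA ^ 2 - 1)) (Fin n ⊕ Fin (dB ^ 2 - 1)) ℂ :=
  Matrix.fromBlocks
    (Matrix.of fun _ _ => ((x * y / Real.sqrt (κA * κB * dA * dB) : ℝ) : ℂ))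
    (Matrix.of fun _ j => ((x / Real.sqrt (κA * dA) : ℝ) : ℂ) * s j)
    (Matrix.of fun i _ => ((y / Real.sqrt (κB * dB) : ℝ) : ℂ) * r i)
    T

lemma span_coeff {d ι : Type*} [Fintype d] [DecidableEq d] [Fintype ι] [DecidableEq ι]
    (G : ι → Matrix d d ℂ) (κ : ℝ)
    (horth : ∀ i j, ((G i)ᴴ * G j).trace = if i = j then (κ : ℂ) else 0)
    {X : Matrix d d ℂ} (hX : X ∈ Submodule.span ℂ (Set.range G)) :
    ∃ c : ι → ℂ, X = ∑ i, c i • G i ∧ ∀ i, ((G i)ᴴ * X).trace = κ * c i := by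
  obtain ⟨c, hc⟩ := (Submodule.mem_span_range_iff_exists_fun ℂ).1 hX
  refine ⟨c, hc.symm, fun i => ?_⟩
  rw [← hc, Matrix.mul_sum, trace_sum]
  simp only [Matrix.mul_smul, trace_smul, horth]
  simp [Finset.sum_ite_eq', mul_comm]

lemma purity {d : Type*} [Fintype d] [DecidableEq d] {ρ : Matrix d d ℂ}
    (h : ρ.PosSemidef) (ht : ρ.trace = 1) : ((ρᴴ * ρ).trace).re ≤ 1 := by
  have hH := h.1
  have h1 : star (hH.eigenvectorUnitary : Matrix d d ℂ) * (hH.eigenvectorUnitary : Matrix d d ℂ)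
      = 1 := Unitary.coe_star_mul_self _
  have h2 : (hH.eigenvectorUnitary : Matrix d d ℂ) * star (hH.eigenvectorUnitary : Matrix d d ℂ)
      = 1 := Unitary.coe_mul_star_self _
  have hdiag : star (hH.eigenvectorUnitary : Matrix d d ℂ) * ρ * (hH.eigenvectorUnitary : Matrix d d ℂ)
      = diagonal (RCLike.ofReal ∘ hH.eigenvalues) := by
    have := hH.conjStarAlgAut_star_eigenvectorUnitary
    simp only [Unitary.conjStarAlgAut_apply, Unitary.coe_star, star_star] at this
    exact this
  have htr2 : ρ.trace = ∑ i, (hH.eigenvalues i : ℂ) := by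
    have h3 := congrArg Matrix.trace hdiag
    rw [trace_mul_cycle, Matrix.mul_assoc] at h3
    rw [show (hH.eigenvectorUnitary : Matrix d d ℂ) *
        (star (hH.eigenvectorUnitary : Matrix d d ℂ) * ρ)
        = ρ by rw [← Matrix.mul_assoc, h2, Matrix.one_mul]] at h3
    simpa [Matrix.trace_diagonal] using h3
  have hsq : (ρᴴ * ρ).trace = ∑ i, ((hH.eigenvalues i : ℂ))^2 := by
    rw [hH.eq]
    conv_lhs => rw [hH.spectral_theorem, Unitary.conjStarAlgAut_apply]
    rw [show ((hH.eigenvectorUnitary : Matrix d d ℂ)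
          * diagonal (RCLike.ofReal ∘ hH.eigenvalues)
          * star (hH.eigenvectorUnitary : Matrix d d ℂ)) *
        ((hH.eigenvectorUnitary : Matrix d d ℂ)
          * diagonal (RCLike.ofReal ∘ hH.eigenvalues)
          * star (hH.eigenvectorUnitary : Matrix d d ℂ))
        = (hH.eigenvectorUnitary : Matrix d d ℂ) *
            (diagonal (RCLike.ofReal ∘ hH.eigenvalues) *
             diagonal (RCLike.ofReal ∘ hH.eigenvalues)) *
            star (hH.eigenvectorUnitary : Matrix d d ℂ) by
      rw [Matrix.mul_assoc, Matrix.mul_assoc, Matrix.mul_assoc,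
        ← Matrix.mul_assoc (star (hH.eigenvectorUnitary : Matrix d d ℂ)), h1, Matrix.one_mul,
        ← Matrix.mul_assoc, ← Matrix.mul_assoc,
        Matrix.mul_assoc (hH.eigenvectorUnitary : Matrix d d ℂ) (diagonal _) (diagonal _)]]
    rw [trace_mul_cycle, Matrix.mul_assoc]
    rw [show (star (hH.eigenvectorUnitary : Matrix d d ℂ)) *
        ((hH.eigenvectorUnitary : Matrix d d ℂ) *
         (diagonal (RCLike.ofReal ∘ hH.eigenvalues) * diagonal (RCLike.ofReal ∘ hH.eigenvalues)))
        = diagonal (RCLike.ofReal ∘ hH.eigenvalues) * diagonal (RCLike.ofReal ∘ hH.eigenvalues) by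
      rw [← Matrix.mul_assoc, h1, Matrix.one_mul]]
    rw [diagonal_mul_diagonal, Matrix.trace_diagonal]
    simp [sq]
  have hnn : ∀ i, 0 ≤ hH.eigenvalues i := h.eigenvalues_nonneg
  have hsum1 : ∑ i, hH.eigenvalues i = 1 := by
    have := congrArg Complex.re (ht ▸ htr2)
    simpa using this.symm
  have hle : ∑ i, (hH.eigenvalues i)^2 ≤ (∑ i, hH.eigenvalues i)^2 :=
    Finset.sum_sq_le_sq_sum_of_nonneg (fun i _ => hnn i)
  rw [hsum1, one_pow] at hle
  calc ((ρᴴ * ρ).trace).re = ∑ i, (hH.eigenvalues i)^2 := by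
        rw [hsq]; simp [← Complex.ofReal_pow]
    _ ≤ 1 := hle

lemma mul_star_self_eq (z : ℂ) : z * star z = (‖z‖ : ℂ) ^ 2 := by
  rw [Complex.star_def, Complex.mul_conj]
  norm_cast
  simp [Complex.normSq_eq_norm_sq]

lemma triple_swap {α β γ : Type*} [Fintype α] [Fintype β] [Fintype γ] (f : α → β → γ → ℂ) :
    ∑ a, ∑ b, ∑ c, f a b c = ∑ c, ∑ a, ∑ b, f a b c :=
  (Finset.sum_congr rfl fun _ _ => Finset.sum_comm).trans Finset.sum_comm

lemma bloch_exists (d : ℕ) (hd : 2 ≤ d) (κ : ℝ) (hκ : 1 ≤ κ)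
    (G : Fin (d ^ 2 - 1) → Matrix (Fin d) (Fin d) ℂ)
    (htr : ∀ i, (G i).trace = 0)
    (horth : ∀ i j, ((G i)ᴴ * G j).trace = if i = j then (κ : ℂ) else 0)
    (hspan : ∀ X : Matrix (Fin d) (Fin d) ℂ, X.trace = 0 → X ∈ Submodule.span ℂ (Set.range G))
    (ρ : Matrix (Fin d) (Fin d) ℂ) (hρ : IsDensityMatrix ρ) :
    ∃ c : Fin (d ^ 2 - 1) → ℂ,
      ρ = (d : ℂ)⁻¹ • 1 + ∑ i, c i • G i ∧
      (∀ i, ((G i)ᴴ * ρ).trace = κ * c i) ∧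
      ∑ i, ‖c i‖ ^ 2 ≤ ((d : ℝ) - 1) / (κ * d) := by
  have hd0 : (0 : ℝ) < d := by positivity
  have hdne : (d : ℝ) ≠ 0 := by positivity
  have hκ0 : (0 : ℝ) < κ := lt_of_lt_of_le one_pos hκ
  have hdC : (d : ℂ) ≠ 0 := Nat.cast_ne_zero.2 (by omega)
  set X : Matrix (Fin d) (Fin d) ℂ := ρ - (d : ℂ)⁻¹ • 1 with hXdef
  have hXtr : X.trace = 0 := by
    simp [hXdef, trace_sub, trace_smul, hρ.2, trace_one, inv_mul_cancel₀ hdC]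
  obtain ⟨c, hc, hctr⟩ := span_coeff G κ horth (hspan X hXtr)
  have hρX : ρ = (d : ℂ)⁻¹ • 1 + X := by
    show ρ = (d : ℂ)⁻¹ • 1 + (ρ - (d : ℂ)⁻¹ • 1); abel
  have hρeq : ρ = (d : ℂ)⁻¹ • 1 + ∑ i, c i • G i := by rw [← hc]; exact hρX
  have hXH : Xᴴ.trace = 0 := by rw [trace_conjTranspose, hXtr, star_zero]
  have hGH : ∀ i, ((G i)ᴴ).trace = 0 := fun i => by
    rw [trace_conjTranspose, htr i, star_zero]
  have htrρ : ∀ i, ((G i)ᴴ * ρ).trace = κ * c i := by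
    intro i
    have : ρ = X + (d : ℂ)⁻¹ • 1 := by rw [hXdef]; abel
    rw [this, Matrix.mul_add, trace_add, hctr i, Matrix.mul_smul, trace_smul, Matrix.mul_one,
      hGH i]
    simp
  refine ⟨c, hρeq, htrρ, ?_⟩
  -- purity computation
  have hXHX : (Xᴴ * X).trace = (κ : ℂ) * ∑ i, (‖c i‖ ^ 2 : ℝ) := by
    conv_lhs => rw [show Xᴴ = ∑ i, star (c i) • (G i)ᴴ by
      rw [hc]; simp [conjTranspose_sum, conjTranspose_smul]]
    rw [Matrix.sum_mul, trace_sum]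
    simp only [Matrix.smul_mul, trace_smul, hctr, smul_eq_mul]
    push_cast
    rw [Finset.mul_sum]
    refine Finset.sum_congr rfl fun i _ => ?_
    rw [show star (c i) * (↑κ * c i) = ↑κ * (star (c i) * c i) by ring]
    congr 1
    rw [Complex.star_def, mul_comm, Complex.mul_conj]
    norm_cast
    simp [Complex.normSq_eq_norm_sq]
  have hcalc : (ρᴴ * ρ).trace
      = ((1 / d + κ * ∑ i, ‖c i‖ ^ 2 : ℝ) : ℂ) := by
    conv_lhs => rw [hρX, conjTranspose_add, conjTranspose_smul, conjTranspose_one]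
    rw [Matrix.add_mul, Matrix.mul_add, Matrix.mul_add, trace_add, trace_add, trace_add,
      hXHX]
    simp only [Matrix.smul_mul, Matrix.mul_smul, Matrix.one_mul, Matrix.mul_one,
      trace_smul, hXtr, hXH, trace_one, smul_eq_mul, mul_zero, add_zero, zero_add]
    have hstar : star ((d : ℂ))⁻¹ = ((d : ℂ))⁻¹ := by
      simp
    rw [hstar]
    push_cast
    field_simp
    rw [Fintype.card_fin]
    ring
  have hP := purity hρ.1 hρ.2
  rw [hcalc, Complex.ofReal_re] at hP
  have hS : 0 ≤ ∑ i, ‖c i‖ ^ 2 :=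
    Finset.sum_nonneg fun i _ => by positivity
  calc ∑ i, ‖c i‖ ^ 2 ≤ (1 - 1/d)/κ := by
        rw [le_div_iff₀ hκ0]; nlinarith
    _ = ((d : ℝ) - 1) / (κ * d) := by
        rw [show (1 - 1/(d:ℝ)) = ((d:ℝ)-1)/d by field_simp, div_div, mul_comm (d:ℝ) κ]
set_option maxHeartbeats 2000000 in
/-- **Entanglement witness**: for a separable state `ρ`, any matrix `O` of operator norm at
most `1` (i.e. `I − O†O ⪰ 0`) satisfies
`Re Tr(O† M_{x,y}^{(n)}) ≤ √(((n x² + d_A − 1)/(κ_A d_A))((n y² + d_B − 1)/(κ_B d_B)))`;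
in particular the witness functional is nonnegative on `ρ`. -/
theorem entanglement_witness_of_separable
    (dA dB : ℕ) (hdA : 2 ≤ dA) (hdB : 2 ≤ dB)
    (κA κB : ℝ) (hκA : 1 ≤ κA) (hκB : 1 ≤ κB)
    (GA : Fin (dA ^ 2 - 1) → Matrix (Fin dA) (Fin dA) ℂ)
    (GB : Fin (dB ^ 2 - 1) → Matrix (Fin dB) (Fin dB) ℂ)
    (hGAtr : ∀ i, (GA i).trace = 0)
    (hGBtr : ∀ j, (GB j).trace = 0)
    (hGAorth : ∀ i j, ((GA i)ᴴ * GA j).trace = if i = j then (κA : ℂ) else 0)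
    (hGBorth : ∀ i j, ((GB i)ᴴ * GB j).trace = if i = j then (κB : ℂ) else 0)
    (hGAspan : ∀ X : Matrix (Fin dA) (Fin dA) ℂ, X.trace = 0 →
      X ∈ Submodule.span ℂ (Set.range GA))
    (hGBspan : ∀ X : Matrix (Fin dB) (Fin dB) ℂ, X.trace = 0 →
      X ∈ Submodule.span ℂ (Set.range GB))
    (ρ : Matrix (Fin dA × Fin dB) (Fin dA × Fin dB) ℂ)
    (hρ : IsDensityMatrix ρ)
    (hsep : IsSeparableState dA dB ρ)
    (r : Fin (dA ^ 2 - 1) → ℂ) (s : Fin (dB ^ 2 - 1) → ℂ)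
    (T : Matrix (Fin (dA ^ 2 - 1)) (Fin (dB ^ 2 - 1)) ℂ)
    (hexp : ρ =
      ((dA : ℂ)⁻¹ • (1 : Matrix (Fin dA) (Fin dA) ℂ)) ⊗ₖ
        ((dB : ℂ)⁻¹ • (1 : Matrix (Fin dB) (Fin dB) ℂ))
      + ∑ i, r i • (GA i ⊗ₖ ((dB : ℂ)⁻¹ • (1 : Matrix (Fin dB) (Fin dB) ℂ)))
      + ∑ j, s j • (((dA : ℂ)⁻¹ • (1 : Matrix (Fin dA) (Fin dA) ℂ)) ⊗ₖ GB j)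
      + ∑ i, ∑ j, T i j • (GA i ⊗ₖ GB j))
    (x y : ℝ) (hx : 0 ≤ x) (hy : 0 ≤ y) (n : ℕ) (hn : 0 < n)
    (O : Matrix (Fin n ⊕ Fin (dA ^ 2 - 1)) (Fin n ⊕ Fin (dB ^ 2 - 1)) ℂ)
    (hO : ((1 : Matrix (Fin n ⊕ Fin (dB ^ 2 - 1)) (Fin n ⊕ Fin (dB ^ 2 - 1)) ℂ)
      - Oᴴ * O).PosSemidef) :
    ((Oᴴ * extCorrTensor dA dB n κA κB x y r s T).trace).re ≤
      Real.sqrt (((n * x ^ 2 + dA - 1) / (κA * dA)) * ((n * y ^ 2 + dB - 1) / (κB * dB))) ∧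
    0 ≤ Real.sqrt (((n * x ^ 2 + dA - 1) / (κA * dA)) *
          ((n * y ^ 2 + dB - 1) / (κB * dB))) * (ρ.trace).re
        - ((Oᴴ * extCorrTensor dA dB n κA κB x y r s T).trace).re := by
  obtain ⟨hPSD, htrρ1⟩ := hρ
  obtain ⟨N, p, ρA, ρB, hp, hpsum, hDA, hDB, hrhoeq⟩ := hsep
  choose a ha1 ha2 ha3 using fun l =>
    bloch_exists dA hdA κA hκA GA hGAtr hGAorth hGAspan (ρA l) (hDA l)
  choose b hb1 hb2 hb3 using fun l =>
    bloch_exists dB hdB κB hκB GB hGBtr hGBorth hGBspan (ρB l) (hDB l)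
  have hκA0 : (0:ℝ) < κA := lt_of_lt_of_le one_pos hκA
  have hκB0 : (0:ℝ) < κB := lt_of_lt_of_le one_pos hκB
  have hdA0 : (0:ℝ) < dA := by positivity
  have hdB0 : (0:ℝ) < dB := by positivity
  have hdAC : (dA : ℂ) ≠ 0 := Nat.cast_ne_zero.2 (by omega)
  have hdBC : (dB : ℂ) ≠ 0 := Nat.cast_ne_zero.2 (by omega)
  have hκAC : (κA : ℂ) ≠ 0 := Complex.ofReal_ne_zero.2 (ne_of_gt hκA0)
  have hκBC : (κB : ℂ) ≠ 0 := Complex.ofReal_ne_zero.2 (ne_of_gt hκB0)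
  have hGAH : ∀ i, ((GA i)ᴴ).trace = 0 := fun i => by
    rw [trace_conjTranspose, hGAtr i, star_zero]
  have hGBH : ∀ j, ((GB j)ᴴ).trace = 0 := fun j => by
    rw [trace_conjTranspose, hGBtr j, star_zero]
  -- identification of r
  have hFr : ∀ i, (((GA i)ᴴ ⊗ₖ (1 : Matrix (Fin dB) (Fin dB) ℂ)) * ρ).trace = κA * r i := by
    intro i
    rw [hexp]
    simp only [Matrix.mul_add, trace_add, Matrix.mul_sum, trace_sum, Matrix.mul_smul,
      trace_smul, ← mul_kronecker_mul, trace_kronecker, Matrix.mul_smul, Matrix.mul_one,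
      Matrix.one_mul, trace_smul, smul_eq_mul, hGAH, hGAorth, hGBtr, trace_one,
      mul_zero, zero_mul, mul_ite, ite_mul, zero_add, add_zero, Finset.sum_ite_eq',
      Finset.mem_univ, if_true, Finset.sum_const_zero]
    simp only [Finset.sum_ite_eq, Finset.mem_univ, if_true, Fintype.card_fin, ite_self,
      Finset.sum_const_zero, add_zero]
    field_simp
  have hGr : ∀ i, (((GA i)ᴴ ⊗ₖ (1 : Matrix (Fin dB) (Fin dB) ℂ)) * ρ).trace
      = κA * ∑ l, (p l : ℂ) * a l i := by
    intro i
    rw [hrhoeq]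
    simp only [Matrix.mul_sum, trace_sum, Matrix.mul_smul, trace_smul, ← mul_kronecker_mul,
      trace_kronecker, Matrix.one_mul, smul_eq_mul]
    rw [Finset.mul_sum]
    refine Finset.sum_congr rfl fun l _ => ?_
    rw [ha2 l i, (hDB l).2]
    ring
  have hrr : ∀ i, r i = ∑ l, (p l : ℂ) * a l i := fun i =>
    mul_left_cancel₀ hκAC ((hFr i).symm.trans (hGr i))
  have hFs : ∀ j, (((1 : Matrix (Fin dA) (Fin dA) ℂ) ⊗ₖ (GB j)ᴴ) * ρ).trace = κB * s j := by
    intro j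
    rw [hexp]
    simp only [Matrix.mul_add, trace_add, Matrix.mul_sum, trace_sum, Matrix.mul_smul,
      trace_smul, ← mul_kronecker_mul, trace_kronecker, Matrix.mul_smul, Matrix.mul_one,
      Matrix.one_mul, trace_smul, smul_eq_mul, hGAH, hGBH, hGAtr, hGBorth, trace_one,
      mul_zero, zero_mul, mul_ite, ite_mul, zero_add, add_zero, Finset.sum_ite_eq',
      Finset.mem_univ, if_true, Finset.sum_const_zero]
    simp only [Finset.sum_ite_eq, Finset.mem_univ, if_true, Fintype.card_fin, ite_self,
      Finset.sum_const_zero, add_zero]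
    field_simp
  have hGs : ∀ j, (((1 : Matrix (Fin dA) (Fin dA) ℂ) ⊗ₖ (GB j)ᴴ) * ρ).trace
      = κB * ∑ l, (p l : ℂ) * b l j := by
    intro j
    rw [hrhoeq]
    simp only [Matrix.mul_sum, trace_sum, Matrix.mul_smul, trace_smul, ← mul_kronecker_mul,
      trace_kronecker, Matrix.one_mul, smul_eq_mul]
    rw [Finset.mul_sum]
    refine Finset.sum_congr rfl fun l _ => ?_
    rw [hb2 l j, (hDA l).2]
    ring
  have hss : ∀ j, s j = ∑ l, (p l : ℂ) * b l j := fun j =>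
    mul_left_cancel₀ hκBC ((hFs j).symm.trans (hGs j))
  have hFT : ∀ i j, (((GA i)ᴴ ⊗ₖ (GB j)ᴴ) * ρ).trace = κA * κB * T i j := by
    intro i j
    rw [hexp]
    simp only [Matrix.mul_add, trace_add, Matrix.mul_sum, trace_sum, Matrix.mul_smul,
      trace_smul, ← mul_kronecker_mul, trace_kronecker, Matrix.mul_smul, Matrix.mul_one,
      Matrix.one_mul, trace_smul, smul_eq_mul, hGAH, hGBH, hGAtr, hGBtr, hGAorth, hGBorth,
      trace_one, mul_zero, zero_mul, mul_ite, ite_mul, zero_add, add_zero,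
      Finset.sum_ite_eq', Finset.mem_univ, if_true, Finset.sum_const_zero]
    simp only [Finset.sum_ite_eq, Finset.mem_univ, if_true, ite_self, Finset.sum_const_zero,
      zero_add]
    ring
  have hGT : ∀ i j, (((GA i)ᴴ ⊗ₖ (GB j)ᴴ) * ρ).trace
      = κA * κB * ∑ l, (p l : ℂ) * (a l i * b l j) := by
    intro i j
    rw [hrhoeq]
    simp only [Matrix.mul_sum, trace_sum, Matrix.mul_smul, trace_smul, ← mul_kronecker_mul,
      trace_kronecker, smul_eq_mul]
    rw [Finset.mul_sum]
    refine Finset.sum_congr rfl fun l _ => ?_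
    rw [ha2 l i, hb2 l j]
    ring
  have hTT : ∀ i j, T i j = ∑ l, (p l : ℂ) * (a l i * b l j) := fun i j =>
    mul_left_cancel₀ (mul_ne_zero hκAC hκBC) ((hFT i j).symm.trans (hGT i j))
  -- the product vectors
  set cA : ℝ := x / Real.sqrt (κA * dA) with hcA
  set cB : ℝ := y / Real.sqrt (κB * dB) with hcB
  have hcA0 : 0 ≤ cA := by positivity
  have hcB0 : 0 ≤ cB := by positivity
  set u : Fin N → (Fin n ⊕ Fin (dA ^ 2 - 1)) → ℂ :=
    fun l => Sum.elim (fun _ => (cA : ℂ)) (a l) with hu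
  set v : Fin N → (Fin n ⊕ Fin (dB ^ 2 - 1)) → ℂ :=
    fun l => Sum.elim (fun _ => (cB : ℂ)) (b l) with hv
  have hsplit : Real.sqrt (κA * κB * dA * dB) = Real.sqrt (κA * dA) * Real.sqrt (κB * dB) := by
    rw [show κA * κB * (dA:ℝ) * dB = (κA * dA) * (κB * dB) by ring,
      Real.sqrt_mul (by positivity)]
  have hpsumC : (∑ l, (p l : ℂ)) = 1 := by
    rw [← Complex.ofReal_sum, hpsum, Complex.ofReal_one]
  have hM : ∀ i j, extCorrTensor dA dB n κA κB x y r s T i j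
      = ∑ l, (p l : ℂ) * (u l i * v l j) := by
    intro i j
    cases i with
    | inl i =>
      cases j with
      | inl j =>
        simp only [extCorrTensor, fromBlocks_apply₁₁, Matrix.of_apply, hu, hv, Sum.elim_inl]
        rw [show (∑ l, (p l:ℂ) * ((cA:ℂ) * (cB:ℂ))) = (∑ l, (p l:ℂ)) * ((cA:ℂ) * (cB:ℂ))
          from (Finset.sum_mul _ _ _).symm, hpsumC, one_mul]
        rw [hcA, hcB]
        rw [show x * y / Real.sqrt (κA * κB * dA * dB)
            = (x / Real.sqrt (κA * dA)) * (y / Real.sqrt (κB * dB)) by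
          rw [hsplit, div_mul_div_comm]]
        push_cast
        ring
      | inr j =>
        simp only [extCorrTensor, fromBlocks_apply₁₂, Matrix.of_apply, hu, hv, Sum.elim_inl,
          Sum.elim_inr]
        rw [hss j, Finset.mul_sum]
        refine Finset.sum_congr rfl fun l _ => ?_
        ring
    | inr i =>
      cases j with
      | inl j =>
        simp only [extCorrTensor, fromBlocks_apply₂₁, Matrix.of_apply, hu, hv, Sum.elim_inl,
          Sum.elim_inr]
        rw [hrr i, Finset.mul_sum]
        refine Finset.sum_congr rfl fun l _ => ?_
        ring
      | inr j =>
        simp only [extCorrTensor, fromBlocks_apply₂₂, Matrix.of_apply, hu, hv, Sum.elim_inr]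
        rw [hTT i j]
  set w : Fin N → (Fin n ⊕ Fin (dA ^ 2 - 1)) → ℂ :=
    fun l => O *ᵥ star (v l) with hw
  have key : (Oᴴ * extCorrTensor dA dB n κA κB x y r s T).trace
      = ∑ l, (p l : ℂ) * ∑ i, u l i * star (w l i) := by
    rw [Matrix.trace]
    simp only [Matrix.diag_apply, Matrix.mul_apply, conjTranspose_apply, hM, hw,
      Matrix.mulVec, dotProduct, Pi.star_apply, star_sum, star_mul', star_star,
      Finset.mul_sum, Finset.sum_mul]
    refine (triple_swap _).trans ?_
    refine Finset.sum_congr rfl fun l _ => ?_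
    refine Eq.trans Finset.sum_comm ?_
    refine Finset.sum_congr rfl fun i _ => ?_
    refine Finset.sum_congr rfl fun j _ => ?_
    ring
  -- operator norm bound: ∑‖w l‖² ≤ ∑‖v l‖²
  have hwv : ∀ l, ∑ i, ‖w l i‖ ^ 2 ≤ ∑ j, ‖v l j‖ ^ 2 := by
    intro l
    have h0 := hO.dotProduct_mulVec_nonneg (star (v l))
    have e1 : star (star (v l)) ⬝ᵥ (((1 : Matrix (Fin n ⊕ Fin (dB ^ 2 - 1))
          (Fin n ⊕ Fin (dB ^ 2 - 1)) ℂ) - Oᴴ * O) *ᵥ star (v l))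
        = ((∑ j, ‖v l j‖ ^ 2 : ℝ) : ℂ) - ((∑ i, ‖w l i‖ ^ 2 : ℝ) : ℂ) := by
      rw [Matrix.sub_mulVec, dotProduct_sub, Matrix.one_mulVec]
      congr 1
      · simp only [star_star, dotProduct, Pi.star_apply]
        push_cast
        refine Finset.sum_congr rfl fun j _ => ?_
        exact mul_star_self_eq _
      · rw [← Matrix.mulVec_mulVec, dotProduct_mulVec, star_star,
          show v l ᵥ* Oᴴ = star (w l) by rw [hw, Matrix.star_mulVec, star_star]]
        simp only [dotProduct, Pi.star_apply]
        push_cast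
        refine Finset.sum_congr rfl fun i _ => ?_
        rw [mul_comm]
        exact mul_star_self_eq (w l i)
    rw [e1] at h0
    have h2 := (Complex.le_def.mp h0).1
    simp only [Complex.zero_re, Complex.sub_re, Complex.ofReal_re] at h2
    linarith
  -- sums of squares of u and v
  have h1A : (1:ℝ) ≤ dA := by exact_mod_cast (by omega : 1 ≤ dA)
  have h1B : (1:ℝ) ≤ dB := by exact_mod_cast (by omega : 1 ≤ dB)
  have hUsum : ∀ l, ∑ i, ‖u l i‖ ^ 2 = n * cA ^ 2 + ∑ i, ‖a l i‖ ^ 2 := by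
    intro l
    rw [Fintype.sum_sum_type]
    simp [hu, Complex.norm_real, abs_of_nonneg hcA0, Finset.sum_const]
  have hVsum : ∀ l, ∑ j, ‖v l j‖ ^ 2 = n * cB ^ 2 + ∑ j, ‖b l j‖ ^ 2 := by
    intro l
    rw [Fintype.sum_sum_type]
    simp [hv, Complex.norm_real, abs_of_nonneg hcB0, Finset.sum_const]
  set KA : ℝ := (n * x ^ 2 + dA - 1) / (κA * dA) with hKAdef
  set KB : ℝ := (n * y ^ 2 + dB - 1) / (κB * dB) with hKBdef
  have hKA0 : 0 ≤ KA := div_nonneg (by nlinarith [sq_nonneg x]) (by positivity)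
  have hKB0 : 0 ≤ KB := div_nonneg (by nlinarith [sq_nonneg y]) (by positivity)
  have hKAeq : n * cA ^ 2 + ((dA:ℝ) - 1) / (κA * dA) = KA := by
    rw [hKAdef, hcA, div_pow, Real.sq_sqrt (by positivity)]
    field_simp
    ring
  have hKBeq : n * cB ^ 2 + ((dB:ℝ) - 1) / (κB * dB) = KB := by
    rw [hKBdef, hcB, div_pow, Real.sq_sqrt (by positivity)]
    field_simp
    ring
  have hAle : ∀ l, ∑ i, ‖u l i‖ ^ 2 ≤ KA := fun l => by
    rw [hUsum l, ← hKAeq]; have := ha3 l; linarith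
  have hBle : ∀ l, ∑ j, ‖v l j‖ ^ 2 ≤ KB := fun l => by
    rw [hVsum l, ← hKBeq]; have := hb3 l; linarith
  -- per-term bound
  have hterm : ∀ l, (∑ i, u l i * star (w l i)).re ≤ Real.sqrt KA * Real.sqrt KB := by
    intro l
    have h1 : (∑ i, u l i * star (w l i)).re ≤ ∑ i, ‖u l i‖ * ‖w l i‖ := by
      calc (∑ i, u l i * star (w l i)).re ≤ ‖∑ i, u l i * star (w l i)‖ :=
            Complex.re_le_norm _
        _ = ‖∑ i, u l i * star (w l i)‖ := rfl
        _ ≤ ∑ i, ‖u l i * star (w l i)‖ := norm_sum_le _ _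
        _ = ∑ i, ‖u l i‖ * ‖w l i‖ := by
            refine Finset.sum_congr rfl fun i _ => ?_
            rw [norm_mul, norm_star]
    have h2 : ∑ i, ‖u l i‖ * ‖w l i‖
        ≤ Real.sqrt (∑ i, ‖u l i‖ ^ 2) * Real.sqrt (∑ i, ‖w l i‖ ^ 2) :=
      Real.sum_mul_le_sqrt_mul_sqrt _ _ _
    have h3 : Real.sqrt (∑ i, ‖u l i‖ ^ 2) * Real.sqrt (∑ i, ‖w l i‖ ^ 2)
        ≤ Real.sqrt KA * Real.sqrt KB := by
      have := Real.sqrt_le_sqrt (hAle l)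
      have h4 : Real.sqrt (∑ i, ‖w l i‖ ^ 2) ≤ Real.sqrt KB :=
        Real.sqrt_le_sqrt ((hwv l).trans (hBle l))
      exact mul_le_mul this h4 (Real.sqrt_nonneg _) (Real.sqrt_nonneg _)
    linarith
  -- put it together
  have hfinal : ((Oᴴ * extCorrTensor dA dB n κA κB x y r s T).trace).re
      ≤ Real.sqrt (KA * KB) := by
    rw [key, Complex.re_sum, Real.sqrt_mul hKA0]
    calc ∑ l, ((p l : ℂ) * ∑ i, u l i * star (w l i)).re
        = ∑ l, p l * (∑ i, u l i * star (w l i)).re := by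
          refine Finset.sum_congr rfl fun l _ => ?_
          rw [Complex.re_ofReal_mul]
      _ ≤ ∑ l, p l * (Real.sqrt KA * Real.sqrt KB) := by
          refine Finset.sum_le_sum fun l _ => ?_
          exact mul_le_mul_of_nonneg_left (hterm l) (hp l)
      _ = Real.sqrt KA * Real.sqrt KB := by
          rw [← Finset.sum_mul, hpsum, one_mul]
  refine ⟨hfinal, ?_⟩
  rw [htrρ1]
  simpa using hfinal
end
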